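/- arXiv:2403.17563 — 4 statements merged into one kernel-verified Lean document; each statement's English description precedes it below -/
import Mathlib

section
/- Let β₁, β₂ > 0 be real numbers and −1 < D < C ≤ 1 real numbers satisfying ν₀(β₁ + β₂ν₁)·(1 − D²) ≥ (C − D)(1 + |D|), where ν₀ = √(1 − sin²1) and ν₁ = −sin 2/(1 + cos 2). Let p be analytic on the open unit disk 𝔻 with p(0) = 1, and suppose that for every z ∈ 𝔻 the value 1 + β₁·z·p′(z) + β₂·z²·p″(z) lies in the open disk {w ∈ ℂ : |w − (1 − CD)/(1 − D²)| < (C − D)/(1 − D²)}. Then for every z ∈ 𝔻, p(z) ∈ {1 + sin w : w ∈ 𝔻}, i.e. p(z) ≺ 1 + sin z. -/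
open Metric

section part1
variable {β₁ β₂ M : ℝ} {p : ℂ → ℂ}

lemma q_bound (hβ₂ : 0 < β₂) (hβ : β₂ < β₁) (hM : 0 ≤ M)
    (hp : AnalyticOnNhd ℂ p (ball 0 1))
    (hg : ∀ w ∈ ball (0:ℂ) 1,
      ‖(β₁:ℂ) * w * deriv p w + (β₂:ℂ) * w^2 * deriv (deriv p) w‖ ≤ M * ‖w‖)
    {z : ℂ} (hz : z ∈ ball (0:ℂ) 1) :
    ‖z * deriv p z‖ ≤ M * ‖z‖ / β₁ := by
  have hβ₁ : 0 < β₁ := lt_trans hβ₂ hβ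
  set γ : ℝ := (β₁ - β₂)/β₂ with hγdef
  have hγ : 0 < γ := div_pos (by linarith) hβ₂
  have hγ1 : (γ + 1) * β₂ = β₁ := by rw [hγdef]; field_simp; ring
  have hb2 : (β₂:ℂ) ≠ 0 := Complex.ofReal_ne_zero.mpr hβ₂.ne'
  set g : ℂ → ℂ := fun v => (β₁:ℂ) * v * deriv p v + (β₂:ℂ) * v^2 * deriv (deriv p) v with hgdef
  set Q : ℝ → ℂ := fun u => ((u:ℂ)*z) * deriv p ((u:ℂ)*z) with hQdef
  set R : ℝ → ℂ := fun u => (u ^ γ : ℝ) • Q u with hRdef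
  set f : ℝ → ℂ := fun u => (u ^ (γ-1) : ℝ) • ((β₂:ℂ)⁻¹ * g ((u:ℂ)*z)) with hfdef
  have hzlt : ‖z‖ < 1 := mem_ball_zero_iff.mp hz
  have hmul : Continuous (fun u : ℝ => (u:ℂ)*z) := by continuity
  have hmem : ∀ u : ℝ, 0 ≤ u → u ≤ 1 → ((u:ℂ)*z) ∈ ball (0:ℂ) 1 := by
    intro u h0 h1
    rw [mem_ball_zero_iff, norm_mul, Complex.norm_real, Real.norm_eq_abs, abs_of_nonneg h0]
    nlinarith [norm_nonneg z]
  -- derivative of R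
  have hRderiv : ∀ u : ℝ, 0 < u → u ≤ 1 → HasDerivAt R (f u) u := by
    intro u hu0 hu1
    have hw : ((u:ℂ)*z) ∈ ball (0:ℂ) 1 := hmem u hu0.le hu1
    set w : ℂ := (u:ℂ)*z with hwdef
    have hd2 : HasDerivAt (deriv p) (deriv (deriv p) w) w :=
      (hp.deriv w hw).differentiableAt.hasDerivAt
    have h1 : HasDerivAt (fun v : ℂ => v * deriv p v)
        (deriv p w + w * deriv (deriv p) w) w := by
      simpa using (hasDerivAt_id' (x := w)).fun_mul hd2
    have h2 : HasDerivAt (fun t : ℂ => t * z) ((1:ℂ) * z) (u:ℂ) := (hasDerivAt_id _).mul_const z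
    have h1' : HasDerivAt (fun v : ℂ => v * deriv p v)
        (deriv p w + w * deriv (deriv p) w) ((u:ℂ) * z) := hwdef ▸ h1
    have h3 := HasDerivAt.comp (𝕜 := ℂ) (u:ℂ) h1' h2
    have hQ : HasDerivAt Q ((deriv p w + w * deriv (deriv p) w) * z) u := by
      simpa [Function.comp] using h3.comp_ofReal
    have hrpow : HasDerivAt (fun x : ℝ => x ^ γ) (γ * u ^ (γ - 1)) u :=
      Real.hasDerivAt_rpow_const (Or.inl hu0.ne')
    have hprod := hrpow.smul hQ
    have hupow : u ^ γ = u ^ (γ-1) * u := by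
      rw [← Real.rpow_add_one hu0.ne' (γ-1)]; ring_nf
    have heq : (u ^ γ : ℝ) • ((deriv p w + w * deriv (deriv p) w) * z)
        + (γ * u ^ (γ - 1)) • Q u = f u := by
      rw [hfdef]
      simp only [Complex.real_smul, hQdef, hgdef, hupow]
      push_cast
      rw [hγdef]
      push_cast
      field_simp
      ring
    rw [hRdef]
    exact heq ▸ hprod
  -- continuity of g
  have hgc : ContinuousOn g (ball (0:ℂ) 1) := by
    have h2 := hp.deriv.continuousOn
    have h3 := hp.deriv.deriv.continuousOn
    rw [hgdef]
    exact (((continuousOn_const.mul continuousOn_id).mul h2).add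
      ((continuousOn_const.mul (continuousOn_id.pow 2)).mul h3))
  have hfc : ∀ ε : ℝ, 0 < ε → ε ≤ 1 → ContinuousOn f (Set.Icc ε 1) := by
    intro ε hε0 hε1
    apply ContinuousOn.fun_smul
    · intro t ht
      exact (Real.continuousAt_rpow_const t (γ-1)
        (Or.inl (lt_of_lt_of_le hε0 ht.1).ne')).continuousWithinAt
    · apply ContinuousOn.mul continuousOn_const
      apply hgc.comp hmul.continuousOn
      intro t ht
      exact hmem t (le_trans hε0.le ht.1) ht.2
  -- key estimate
  have key : ∀ ε : ℝ, 0 < ε → ε ≤ 1 → ‖R 1‖ ≤ ‖R ε‖ + M * ‖z‖ / β₁ := by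
    intro ε hε0 hε1
    have hFTC : ∫ t in ε..1, f t = R 1 - R ε := by
      apply intervalIntegral.integral_eq_sub_of_hasDerivAt
      · intro t ht
        rw [Set.uIcc_of_le hε1] at ht
        exact hRderiv t (lt_of_lt_of_le hε0 ht.1) ht.2
      · apply ContinuousOn.intervalIntegrable
        rw [Set.uIcc_of_le hε1]
        exact hfc ε hε0 hε1
    have hbound : ‖∫ t in ε..1, f t‖ ≤ |∫ t in ε..1, (M * ‖z‖ / β₂) * t ^ γ| := by
      apply intervalIntegral.norm_integral_le_abs_of_norm_le
      · rw [Set.uIoc_of_le hε1]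
        filter_upwards [MeasureTheory.ae_restrict_mem measurableSet_Ioc] with t ht
        have ht0 : 0 < t := lt_trans hε0 ht.1
        have hwmem := hmem t ht0.le ht.2
        have hgb := hg _ hwmem
        rw [hfdef]
        simp only
        rw [norm_smul, Real.norm_eq_abs, abs_of_nonneg (Real.rpow_nonneg ht0.le _)]
        have hnz : ‖(t:ℂ)*z‖ = t * ‖z‖ := by
          rw [norm_mul, Complex.norm_real, Real.norm_eq_abs, abs_of_pos ht0]
        have h1 : ‖(β₂:ℂ)⁻¹ * g ((t:ℂ)*z)‖ ≤ β₂⁻¹ * (M * (t * ‖z‖)) := by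
          rw [norm_mul]
          have hn : ‖((β₂:ℂ))⁻¹‖ = β₂⁻¹ := by
            rw [norm_inv, Complex.norm_real, Real.norm_eq_abs, abs_of_pos hβ₂]
          rw [hn]
          apply mul_le_mul_of_nonneg_left _ (by positivity)
          simp only [hgdef]
          calc ‖(β₁:ℂ) * (↑t*z) * deriv p (↑t*z) + (β₂:ℂ) * (↑t*z)^2 * deriv (deriv p) (↑t*z)‖
              ≤ M * ‖(t:ℂ)*z‖ := hgb
            _ = M * (t * ‖z‖) := by rw [hnz]
        calc t ^ (γ-1) * ‖(β₂:ℂ)⁻¹ * g ((t:ℂ)*z)‖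
            ≤ t ^ (γ-1) * (β₂⁻¹ * (M * (t * ‖z‖))) :=
              mul_le_mul_of_nonneg_left h1 (Real.rpow_nonneg ht0.le _)
          _ = (M * ‖z‖ / β₂) * (t ^ (γ-1) * t) := by field_simp
          _ = (M * ‖z‖ / β₂) * t ^ γ := by
              rw [← Real.rpow_add_one ht0.ne' (γ-1)]; ring_nf
      · apply ContinuousOn.intervalIntegrable
        rw [Set.uIcc_of_le hε1]
        apply continuousOn_const.mul
        intro t ht
        exact (Real.continuousAt_rpow_const t γ
          (Or.inl (lt_of_lt_of_le hε0 ht.1).ne')).continuousWithinAt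
    have hεpow : 0 ≤ ε ^ (γ+1) := Real.rpow_nonneg hε0.le _
    have hεpow1 : ε ^ (γ+1) ≤ 1 := by
      exact le_trans (Real.rpow_le_rpow hε0.le hε1 (by linarith)) (le_of_eq (Real.one_rpow _))
    have hval : ∫ t in ε..1, (M * ‖z‖ / β₂) * t ^ γ
        = (M * ‖z‖ / β₂) * ((1 - ε ^ (γ+1))/(γ+1)) := by
      rw [intervalIntegral.integral_const_mul, integral_rpow (Or.inl (by linarith : (-1:ℝ) < γ)),
        Real.one_rpow]
    have hval2 : (M * ‖z‖ / β₂) * ((1 - ε ^ (γ+1))/(γ+1)) ≤ M * ‖z‖ / β₁ := by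
      rw [div_mul_div_comm, div_le_div_iff₀ (by positivity) hβ₁]
      have hMz : 0 ≤ M * ‖z‖ := by positivity
      nlinarith [mul_le_mul_of_nonneg_left hεpow (mul_nonneg hMz hβ₁.le)]
    have habs : |∫ t in ε..1, (M * ‖z‖ / β₂) * t ^ γ| ≤ M * ‖z‖ / β₁ := by
      rw [hval, abs_of_nonneg (mul_nonneg (by positivity)
        (div_nonneg (by linarith) (by linarith)))]
      exact hval2
    calc ‖R 1‖ = ‖R ε + ∫ t in ε..1, f t‖ := by rw [hFTC]; ring_nf
      _ ≤ ‖R ε‖ + ‖∫ t in ε..1, f t‖ := norm_add_le _ _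
      _ ≤ ‖R ε‖ + M * ‖z‖ / β₁ := by linarith [le_trans hbound habs]
  -- limit as ε → 0
  have hRlim : Filter.Tendsto (fun ε => ‖R ε‖) (nhdsWithin 0 (Set.Ioi 0)) (nhds 0) := by
    have h1 : Filter.Tendsto (fun ε : ℝ => ε ^ γ) (nhds 0) (nhds 0) := by
      have := (Real.continuousAt_rpow_const 0 γ (Or.inr hγ.le)).tendsto
      rwa [Real.zero_rpow hγ.ne'] at this
    have h2 : Filter.Tendsto Q (nhds 0) (nhds 0) := by
      have ht1 : Filter.Tendsto (fun u : ℝ => (u:ℂ)*z) (nhds 0) (nhds 0) := by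
        simpa using hmul.tendsto 0
      have ht2 : Filter.Tendsto (fun u : ℝ => deriv p ((u:ℂ)*z)) (nhds 0)
          (nhds (deriv p 0)) :=
        ((hp.deriv 0 (mem_ball_self one_pos)).continuousAt.tendsto).comp ht1
      have := ht1.mul ht2
      rw [zero_mul] at this
      exact this
    have h3 : Filter.Tendsto R (nhds 0) (nhds ((0:ℝ) • (0:ℂ))) := h1.smul h2
    rw [zero_smul] at h3
    exact (tendsto_zero_iff_norm_tendsto_zero.mp h3).mono_left nhdsWithin_le_nhds
  have hfinal : ‖R 1‖ ≤ M * ‖z‖ / β₁ := by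
    have hten : Filter.Tendsto (fun ε => ‖R ε‖ + M * ‖z‖ / β₁) (nhdsWithin 0 (Set.Ioi 0))
        (nhds (0 + M * ‖z‖ / β₁)) := hRlim.add tendsto_const_nhds
    rw [zero_add] at hten
    apply ge_of_tendsto hten
    filter_upwards [Ioo_mem_nhdsGT_of_mem (Set.left_mem_Ico.mpr one_pos)] with ε hε
    exact key ε hε.1 hε.2.le
  have hR1 : R 1 = z * deriv p z := by
    rw [hRdef]; simp [hQdef, Real.one_rpow]
  rwa [hR1] at hfinal

end part1

lemma p_bound {β₁ β₂ M : ℝ} {p : ℂ → ℂ} (hβ₂ : 0 < β₂) (hβ : β₂ < β₁) (hM : 0 ≤ M)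
    (hp : AnalyticOnNhd ℂ p (ball 0 1))
    (hg : ∀ w ∈ ball (0:ℂ) 1,
      ‖(β₁:ℂ) * w * deriv p w + (β₂:ℂ) * w^2 * deriv (deriv p) w‖ ≤ M * ‖w‖)
    {z : ℂ} (hz : z ∈ ball (0:ℂ) 1) :
    ‖p z - p 0‖ ≤ M * ‖z‖ / β₁ := by
  have hβ₁ : 0 < β₁ := lt_trans hβ₂ hβ
  have hzlt : ‖z‖ < 1 := mem_ball_zero_iff.mp hz
  have hmul : Continuous (fun u : ℝ => (u:ℂ)*z) := by continuity
  have hmem : ∀ u : ℝ, 0 ≤ u → u ≤ 1 → ((u:ℂ)*z) ∈ ball (0:ℂ) 1 := by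
    intro u h0 h1
    rw [mem_ball_zero_iff, norm_mul, Complex.norm_real, Real.norm_eq_abs, abs_of_nonneg h0]
    nlinarith [norm_nonneg z]
  have hP : ∀ u ∈ Set.uIcc (0:ℝ) 1,
      HasDerivAt (fun t : ℝ => p ((t:ℂ)*z)) (deriv p ((u:ℂ)*z) * z) u := by
    intro u hu
    rw [Set.uIcc_of_le zero_le_one] at hu
    have hw : ((u:ℂ)*z) ∈ ball (0:ℂ) 1 := hmem u hu.1 hu.2
    have hd : HasDerivAt p (deriv p ((u:ℂ)*z)) ((u:ℂ)*z) :=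
      (hp _ hw).differentiableAt.hasDerivAt
    have h2 : HasDerivAt (fun t : ℂ => t * z) ((1:ℂ) * z) (u:ℂ) := (hasDerivAt_id _).mul_const z
    have h3 := HasDerivAt.comp (𝕜 := ℂ) (u:ℂ) hd h2
    simpa [Function.comp] using h3.comp_ofReal
  have hint : IntervalIntegrable (fun u : ℝ => deriv p ((u:ℂ)*z) * z)
      MeasureTheory.volume 0 1 := by
    apply ContinuousOn.intervalIntegrable
    rw [Set.uIcc_of_le zero_le_one]
    apply ContinuousOn.mul _ continuousOn_const
    apply (hp.deriv.continuousOn).comp hmul.continuousOn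
    intro t ht
    exact hmem t ht.1 ht.2
  have hFTC := intervalIntegral.integral_eq_sub_of_hasDerivAt hP hint
  have hval : p z - p 0 = ∫ u in (0:ℝ)..1, deriv p ((u:ℂ)*z) * z := by
    rw [hFTC, show ((1:ℝ):ℂ) * z = z by push_cast; ring,
      show ((0:ℝ):ℂ) * z = 0 by push_cast; ring]
  rw [hval]
  have hle : ∀ u ∈ Set.uIoc (0:ℝ) 1, ‖deriv p ((u:ℂ)*z) * z‖ ≤ M * ‖z‖ / β₁ := by
    intro u hu
    rw [Set.uIoc_of_le zero_le_one] at hu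
    have hw : ((u:ℂ)*z) ∈ ball (0:ℂ) 1 := hmem u hu.1.le hu.2
    have hq := q_bound hβ₂ hβ hM hp hg hw
    have hnorm : ‖((u:ℂ)*z) * deriv p ((u:ℂ)*z)‖ = u * ‖deriv p ((u:ℂ)*z) * z‖ := by
      rw [show ((u:ℂ)*z) * deriv p ((u:ℂ)*z) = (u:ℂ) * (deriv p ((u:ℂ)*z) * z) by ring,
        norm_mul, Complex.norm_real, Real.norm_eq_abs, abs_of_pos hu.1]
    have hwn : ‖(u:ℂ)*z‖ = u * ‖z‖ := by
      rw [norm_mul, Complex.norm_real, Real.norm_eq_abs, abs_of_pos hu.1]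
    rw [hnorm, hwn] at hq
    rw [show M * (u * ‖z‖) / β₁ = u * (M * ‖z‖ / β₁) from by ring] at hq
    exact le_of_mul_le_mul_left hq hu.1
  have := intervalIntegral.norm_integral_le_of_norm_le_const hle
  simpa using this

lemma abs_sin_sq (w : ℂ) :
    ‖Complex.sin w‖ ^ 2 = Real.sin w.re ^ 2 + Real.sinh w.im ^ 2 := by
  set x := w.re; set y := w.im
  have hw : w = (x : ℂ) + (y : ℂ) * Complex.I := (Complex.re_add_im w).symm
  have : Complex.sin w = (Real.sin x * Real.cosh y : ℝ) + (Real.cos x * Real.sinh y : ℝ) * Complex.I := by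
    rw [hw, Complex.sin_add, Complex.cos_mul_I, Complex.sin_mul_I]
    push_cast
    ring
  rw [this, Complex.sq_norm, Complex.normSq_add_mul_I]
  nlinarith [Real.sin_sq_add_cos_sq x, Real.cosh_sq y]

lemma sin_le_self {a : ℝ} (ha : 0 ≤ a) : Real.sin a ≤ a := by
  rcases eq_or_lt_of_le ha with h | h
  · simp [← h]
  · exact (Real.sin_lt h).le

lemma key_real (x y : ℝ) (hx : |x| ≤ Real.pi / 2)
    (h : Real.sin x ^ 2 + Real.sinh y ^ 2 < Real.sin 1 ^ 2) : x ^ 2 + y ^ 2 < 1 := by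
  have hpi : (2:ℝ) ≤ Real.pi / 2 * 2 := by nlinarith [Real.pi_gt_three]
  have hs1 : Real.sin 1 ≤ 1 := Real.sin_le_one 1
  have hs1p : 0 < Real.sin 1 := Real.sin_pos_of_pos_of_lt_pi one_pos (by nlinarith [Real.pi_gt_three])
  have hsinabs : Real.sin x ^ 2 = Real.sin |x| ^ 2 := by
    rcases abs_cases x with ⟨h1, _⟩ | ⟨h1, _⟩ <;> rw [h1] <;> simp [Real.sin_neg]
  have hsinh : y ^ 2 ≤ Real.sinh y ^ 2 := by
    have h1 : |y| ≤ Real.sinh |y| := by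
      rcases eq_or_lt_of_le (abs_nonneg y) with h2 | h2
      · simp [← h2]
      · exact (Real.self_lt_sinh_iff.mpr h2).le
    have h2 : Real.sinh y ^ 2 = Real.sinh |y| ^ 2 := by
      rcases abs_cases y with ⟨h3, _⟩ | ⟨h3, _⟩ <;> rw [h3] <;> simp [Real.sinh_neg]
    nlinarith [mul_self_le_mul_self (abs_nonneg y) h1, sq_abs y]
  have ha : |x| < 1 := by
    by_contra hcon
    push_neg at hcon
    have : Real.sin 1 ≤ Real.sin |x| := by
      apply Real.sin_le_sin_of_le_of_le_pi_div_two (by linarith [Real.pi_pos]) hx hcon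
    nlinarith [Real.sinh_sq y, Real.sin_nonneg_of_nonneg_of_le_pi (le_trans zero_le_one hcon)
      (by nlinarith [Real.pi_gt_three]), hsinabs]
  have hfac1 : |x| - Real.sin |x| ≤ 1 - Real.sin 1 := by
    have hid : Real.sin 1 - Real.sin |x| = 2 * Real.sin ((1 - |x|)/2) * Real.cos ((1 + |x|)/2) :=
      Real.sin_sub_sin 1 |x|
    have h1 : Real.sin ((1 - |x|)/2) ≤ (1 - |x|)/2 := sin_le_self (by linarith)
    have h2 : Real.cos ((1 + |x|)/2) ≤ 1 := Real.cos_le_one _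
    have h3 : 0 ≤ Real.sin ((1 - |x|)/2) :=
      Real.sin_nonneg_of_nonneg_of_le_pi (by linarith) (by nlinarith [Real.pi_gt_three, abs_nonneg x])
    have h4 : 0 ≤ Real.cos ((1 + |x|)/2) := by
      apply Real.cos_nonneg_of_mem_Icc
      constructor <;> [nlinarith [Real.pi_gt_three, abs_nonneg x]; nlinarith [Real.pi_gt_three]]
    nlinarith
  have hfac2 : |x| + Real.sin |x| ≤ 1 + Real.sin 1 := by
    have : Real.sin |x| ≤ Real.sin 1 :=
      Real.sin_le_sin_of_le_of_le_pi_div_two (by linarith [Real.pi_pos, abs_nonneg x]) (by linarith) ha.le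
    linarith
  have h5 : 0 ≤ |x| - Real.sin |x| := by linarith [sin_le_self (abs_nonneg x)]
  have h6 : 0 ≤ |x| + Real.sin |x| := by
    have := Real.sin_nonneg_of_nonneg_of_le_pi (abs_nonneg x) (by nlinarith [Real.pi_gt_three])
    linarith [abs_nonneg x]
  have hxx : x ^ 2 - Real.sin x ^ 2 ≤ 1 - Real.sin 1 ^ 2 := by
    have : (|x| - Real.sin |x|) * (|x| + Real.sin |x|) ≤ (1 - Real.sin 1) * (1 + Real.sin 1) := by
      apply mul_le_mul hfac1 hfac2 h6 (by linarith)
    have hxa : x ^ 2 = |x| ^ 2 := (sq_abs x).symm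
    nlinarith [hsinabs]
  nlinarith

lemma sqrt_aux {b : ℂ} (hbne : b ≠ 0) :
    (b ^ ((2:ℂ)⁻¹)) ^ 2 = b ∧ 0 ≤ (b ^ ((2:ℂ)⁻¹)).re ∧
      (b ^ ((2:ℂ)⁻¹)).re ^ 2 = (‖b‖ + b.re) / 2 := by
  have h1 : (b ^ ((2:ℂ)⁻¹)) ^ 2 = b := by
    rw [sq, ← Complex.cpow_add _ _ hbne]
    norm_num
  have h2 : (b ^ ((2:ℂ)⁻¹)).re = Real.sqrt ((‖b‖ + b.re) / 2) :=
    Complex.cpow_inv_two_re b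
  refine ⟨h1, h2 ▸ Real.sqrt_nonneg _, ?_⟩
  rw [h2, Real.sq_sqrt]
  have := abs_le.1 (Complex.abs_re_le_norm b)
  linarith [this.1]

lemma exists_sin_eq (ζ : ℂ) (h : ‖ζ‖ < Real.sin 1) :
    ∃ w ∈ ball (0:ℂ) 1, Complex.sin w = ζ := by
  have hs1 : 0 < Real.sin 1 := Real.sin_pos_of_pos_of_lt_pi one_pos (by nlinarith [Real.pi_gt_three])
  have hζ1 : ‖ζ‖ < 1 := lt_of_lt_of_le h (Real.sin_le_one 1)
  have hbne : (1 - ζ ^ 2 : ℂ) ≠ 0 := by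
    intro h0
    have h1 : ζ ^ 2 = 1 := by linear_combination -h0
    have : ‖ζ‖ ^ 2 = 1 := by rw [← norm_pow, h1]; simp
    nlinarith [norm_nonneg ζ]
  obtain ⟨hs2, hsre, hsre2⟩ := sqrt_aux hbne
  set s : ℂ := (1 - ζ ^ 2 : ℂ) ^ ((2:ℂ)⁻¹) with hsdef
  clear_value s
  set u : ℂ := Complex.I * ζ + s with hudef
  clear_value u
  have hI : Complex.I ^ 2 = -1 := Complex.I_sq
  have hune : u ≠ 0 := by
    intro h0
    have hss : s = - (Complex.I * ζ) := by linear_combination h0 - hudef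
    rw [hss] at hs2
    have : (1:ℂ) = 0 := by linear_combination -hs2 + ζ^2 * hI
    simp at this
  have hure : 0 ≤ u.re := by
    have h1 : u.re = s.re - ζ.im := by rw [hudef]; simp; ring
    have h2 : ζ.im ^ 2 ≤ s.re ^ 2 := by
      rw [hsre2]
      have habs : ζ.re ^ 2 + ζ.im ^ 2 < 1 := by
        nlinarith [Complex.sq_norm ζ, Complex.normSq_apply ζ, norm_nonneg ζ, hζ1]
      have hre : (1 - ζ^2 : ℂ).re = 1 - (ζ.re * ζ.re - ζ.im * ζ.im) := by
        rw [Complex.sub_re, Complex.one_re, pow_two, Complex.mul_re]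
      have habsge : (1 - ζ^2 : ℂ).re ≤ ‖(1 - ζ^2 : ℂ)‖ := Complex.re_le_norm _
      nlinarith
    have h3 : |ζ.im| ≤ s.re := by
      rw [← Real.sqrt_sq_eq_abs, ← Real.sqrt_sq hsre]
      exact Real.sqrt_le_sqrt h2
    linarith [le_abs_self ζ.im]
  set w : ℂ := -Complex.I * Complex.log u with hwdef
  have hwI : w * Complex.I = Complex.log u := by
    rw [hwdef]; linear_combination -Complex.log u * hI
  have hsin : Complex.sin w = ζ := by
    have huinv : u⁻¹ = s - Complex.I * ζ := by
      apply inv_eq_of_mul_eq_one_right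
      linear_combination (s - Complex.I*ζ)*hudef + hs2 - ζ^2*hI
    rw [Complex.sin, neg_mul, Complex.exp_neg, hwI, Complex.exp_log hune, huinv, hudef]
    linear_combination -ζ*hI
  refine ⟨w, ?_, hsin⟩
  have hre : w.re = u.arg := by rw [hwdef]; simp [Complex.log_im]
  have hreabs : |w.re| ≤ Real.pi / 2 := by
    rw [hre]; exact Complex.abs_arg_le_pi_div_two_iff.mpr hure
  have habsw : Real.sin w.re ^ 2 + Real.sinh w.im ^ 2 < Real.sin 1 ^ 2 := by
    rw [← abs_sin_sq, hsin]
    nlinarith [norm_nonneg ζ]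
  have hk := key_real w.re w.im hreabs habsw
  rw [mem_ball_zero_iff]
  nlinarith [norm_nonneg w, Complex.sq_norm w, Complex.normSq_apply w]

noncomputable def nu0 : ℝ := Real.sqrt (1 - Real.sin 1 ^ 2)

noncomputable def nu1 : ℝ := -Real.sin 2 / (1 + Real.cos 2)

theorem stmt1 (β₁ β₂ : ℝ) (hβ₁ : 0 < β₁) (hβ₂ : 0 < β₂)
    (C D : ℝ) (hD : -1 < D) (hDC : D < C) (hC : C ≤ 1)
    (hcond : nu0 * (β₁ + β₂ * nu1) * (1 - D ^ 2) ≥ (C - D) * (1 + |D|))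
    (p : ℂ → ℂ) (hp : AnalyticOnNhd ℂ p (ball 0 1)) (hp0 : p 0 = 1)
    (hsub : ∀ z ∈ ball (0 : ℂ) 1,
      ‖(1 + (β₁ : ℂ) * z * deriv p z + (β₂ : ℂ) * z ^ 2 * deriv (deriv p) z) - (((1 - C * D) / (1 - D ^ 2) : ℝ) : ℂ)‖ < (C - D) / (1 - D ^ 2)) :
    ∀ z ∈ ball (0 : ℂ) 1, ∃ w ∈ ball (0 : ℂ) 1, p z = 1 + Complex.sin w := by
  -- trigonometric constants
  have hcos1 : 0 < Real.cos 1 := Real.cos_one_pos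
  have hsin1 : 0 < Real.sin 1 :=
    Real.sin_pos_of_pos_of_lt_pi one_pos (by nlinarith [Real.pi_gt_three])
  have hpyth := Real.sin_sq_add_cos_sq 1
  have hnu0 : nu0 = Real.cos 1 := by
    rw [nu0, show 1 - Real.sin 1 ^ 2 = Real.cos 1 ^ 2 by linarith, Real.sqrt_sq hcos1.le]
  have hnu1 : nu1 = -(Real.sin 1 / Real.cos 1) := by
    rw [nu1, show (2:ℝ) = 2 * 1 by norm_num, Real.sin_two_mul, Real.cos_two_mul]
    rw [show 1 + (2 * Real.cos 1 ^ 2 - 1) = 2 * Real.cos 1 ^ 2 by ring]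
    field_simp
  have hsc : Real.cos 1 < Real.sin 1 := by
    by_contra hcon
    push_neg at hcon
    nlinarith [Real.cos_one_le, mul_self_le_mul_self hsin1.le hcon]
  -- the constant M
  have hD1 : D < 1 := lt_of_lt_of_le hDC hC
  have hden : 0 < 1 - D ^ 2 := by nlinarith
  set M : ℝ := (C - D) * (1 + |D|) / (1 - D ^ 2) with hMdef
  have hM0 : 0 < M := by
    apply div_pos _ hden
    have := abs_nonneg D
    nlinarith
  have hMle : M ≤ Real.cos 1 * β₁ - Real.sin 1 * β₂ := by
    have hc : (Real.cos 1 * β₁ - Real.sin 1 * β₂) * (1 - D ^ 2) ≥ (C - D) * (1 + |D|) := by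
      have : nu0 * (β₁ + β₂ * nu1) = Real.cos 1 * β₁ - Real.sin 1 * β₂ := by
        rw [hnu0, hnu1]
        field_simp
        ring
      rwa [this] at hcond
    rw [hMdef, div_le_iff₀ hden]
    linarith
  have hβlt : β₂ < β₁ := by nlinarith
  -- bound on the differential expression
  set G : ℂ → ℂ := fun w => (β₁:ℂ) * w * deriv p w + (β₂:ℂ) * w^2 * deriv (deriv p) w with hGdef
  have hGlt : ∀ w ∈ ball (0:ℂ) 1, ‖G w‖ < M := by
    intro w hw
    have h1 := hsub w hw
    set c : ℝ := (1 - C * D) / (1 - D ^ 2) with hcdef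
    set ρ : ℝ := (C - D) / (1 - D ^ 2) with hρdef
    have hsplit : G w = ((1 + (β₁:ℂ) * w * deriv p w + (β₂:ℂ) * w ^ 2 * deriv (deriv p) w)
        - ((c:ℝ):ℂ)) + (((c - 1 : ℝ)):ℂ) := by
      push_cast
      rw [hGdef]
      ring
    have habs1 : ‖(((c - 1 : ℝ)):ℂ)‖ = |D| * ρ := by
      rw [Complex.norm_real, Real.norm_eq_abs]
      have : c - 1 = (D * (D - C)) / (1 - D ^ 2) := by
        rw [hcdef]; field_simp; ring
      rw [this, abs_div, abs_of_pos hden, abs_mul, hρdef]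
      rw [show |D - C| = C - D from by rw [abs_sub_comm, abs_of_pos (by linarith)]]
      ring
    have hMsum : ρ + |D| * ρ = M := by
      rw [hρdef, hMdef]; field_simp
    calc ‖G w‖ ≤ ‖(1 + (β₁:ℂ) * w * deriv p w + (β₂:ℂ) * w ^ 2 * deriv (deriv p) w)
          - ((c:ℝ):ℂ)‖ + ‖(((c - 1 : ℝ)):ℂ)‖ := by rw [hsplit]; exact norm_add_le _ _
      _ < ρ + |D| * ρ := by
          rw [habs1]
          have h2 : ‖(1 + (β₁:ℂ) * w * deriv p w + (β₂:ℂ) * w ^ 2 * deriv (deriv p) w)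
              - ((c:ℝ):ℂ)‖ < ρ := h1
          linarith
      _ = M := hMsum
  -- Schwarz lemma
  have hGdiff : DifferentiableOn ℂ G (ball (0:ℂ) 1) := by
    have h2 := hp.deriv.differentiableOn
    have h3 := hp.deriv.deriv.differentiableOn
    rw [hGdef]
    exact (((differentiableOn_const _).mul differentiableOn_id).mul h2).add
      ((((differentiableOn_const _).mul (differentiableOn_id.pow 2))).mul h3)
  have hG0 : G 0 = 0 := by rw [hGdef]; simp
  have hmaps : Set.MapsTo G (ball (0:ℂ) 1) (ball (G 0) M) := by
    intro w hw
    rw [hG0, mem_ball_zero_iff]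
    exact hGlt w hw
  have hGle : ∀ w ∈ ball (0:ℂ) 1, ‖G w‖ ≤ M * ‖w‖ := by
    intro w hw
    have := Complex.dist_le_div_mul_dist_of_mapsTo_ball hGdiff (hmaps.mono_right ball_subset_closedBall) hw
    rw [hG0, dist_zero_right, dist_zero_right, div_one] at this
    exact this
  -- conclusion
  intro z hz
  have hpz : ‖p z - p 0‖ ≤ M * ‖z‖ / β₁ :=
    p_bound hβ₂ hβlt hM0.le hp (by intro w hw; exact hGle w hw) hz
  have hzlt : ‖z‖ < 1 := mem_ball_zero_iff.mp hz
  have hlt : ‖p z - 1‖ < Real.sin 1 := by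
    rw [hp0] at hpz
    have h2 : M / β₁ < Real.cos 1 := by
      rw [div_lt_iff₀ hβ₁]
      nlinarith
    calc ‖p z - 1‖ ≤ M * ‖z‖ / β₁ := hpz
      _ ≤ M / β₁ := by
          gcongr
          nlinarith [norm_nonneg z]
      _ < Real.sin 1 := lt_trans h2 hsc
  obtain ⟨w, hw, hsw⟩ := exists_sin_eq (p z - 1) (by exact hlt)
  exact ⟨w, hw, by linear_combination -hsw⟩
end

section
/- Let β₁, β₂ > 0 be real numbers satisfying ν₀(β₁ + β₂ν₁) ≥ r₀, where ν₀ = √(1 − sin²1), ν₁ = −sin 2/(1 + cos 2), and r₀ ≈ 0.546302 is the unique positive root of r² + 2·cot(1)·r − 1 = 0. Let p be analytic on the open unit disk 𝔻 with p(0) = 1, and suppose that for every z ∈ 𝔻 the value 1 + β₁·z·p′(z) + β₂·z²·p″(z) lies in the set {w ∈ ℂ : w ≠ 0, w ≠ 2, |log(w/(2 − w))| < 1} (principal branch of the complex logarithm). Then for every z ∈ 𝔻, p(z) ∈ {1 + sin w : w ∈ 𝔻}, i.e. p(z) ≺ 1 + sin z. -/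
open Metric Complex Finset intervalIntegral

set_option maxHeartbeats 1000000


lemma exp_I_bound : ‖Complex.exp I - Complex.mk (21785/40320) (4241/5040)‖ ≤ 1/326592 := by
  have h := Complex.exp_bound (x := I) (by simp) (n := 9) (by norm_num)
  have hs : ∑ k ∈ range 9, (I:ℂ) ^ k / (Nat.factorial k) =
      Complex.mk (21785/40320) (4241/5040) := by
    simp [Finset.sum_range_succ, pow_succ, Nat.factorial]
    norm_num [Complex.ext_iff, Complex.I_re, Complex.I_im]
  rw [hs] at h
  exact h.trans_eq (by norm_num [Nat.factorial])

lemma exp_I_re : (Complex.exp I).re = Real.cos 1 := by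
  have : Complex.exp I = Complex.exp (1 * I) := by ring_nf
  rw [this, Complex.exp_mul_I]
  simp [← Complex.ofReal_one, ← Complex.ofReal_cos, ← Complex.ofReal_sin]

lemma exp_I_im : (Complex.exp I).im = Real.sin 1 := by
  have : Complex.exp I = Complex.exp (1 * I) := by ring_nf
  rw [this, Complex.exp_mul_I]
  simp [← Complex.ofReal_one, ← Complex.ofReal_cos, ← Complex.ofReal_sin]

lemma cos_one_lt : Real.cos 1 < 0.54031 := by
  have h := exp_I_bound
  have h1 : |(Complex.exp I - Complex.mk (21785/40320) (4241/5040)).re| ≤ 1/326592 :=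
    (Complex.abs_re_le_norm _).trans h
  rw [Complex.sub_re, exp_I_re] at h1
  have : |Real.cos 1 - 21785/40320| ≤ 1/326592 := by simpa using h1
  have := abs_le.mp this
  norm_num at this ⊢
  linarith [this.2]

lemma cos_one_gt : 0.5402 < Real.cos 1 := by
  have h1 : |(Complex.exp I - Complex.mk (21785/40320) (4241/5040)).re| ≤ 1/326592 :=
    (Complex.abs_re_le_norm _).trans exp_I_bound
  rw [Complex.sub_re, exp_I_re] at h1
  have : |Real.cos 1 - 21785/40320| ≤ 1/326592 := by simpa using h1
  have := abs_le.mp this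
  norm_num at this ⊢
  linarith [this.1]

lemma sin_one_gt : 0.8414 < Real.sin 1 := by
  have h1 : |(Complex.exp I - Complex.mk (21785/40320) (4241/5040)).im| ≤ 1/326592 :=
    (Complex.abs_im_le_norm _).trans exp_I_bound
  rw [Complex.sub_im, exp_I_im] at h1
  have : |Real.sin 1 - 4241/5040| ≤ 1/326592 := by simpa using h1
  have := abs_le.mp this
  norm_num at this ⊢
  linarith [this.1]

lemma cosh_one_lt : Real.cosh 1 < 1.54309 := by
  rw [Real.cosh_eq]
  have h1 : Real.exp 1 < 2.7182818286 := Real.exp_one_lt_d9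
  have h2 : 2.7182818283 < Real.exp 1 := Real.exp_one_gt_d9
  have h3 : Real.exp (-1) = (Real.exp 1)⁻¹ := by rw [Real.exp_neg]
  have h4 : Real.exp (-1) < 0.3678794412 := by
    rw [h3]; rw [inv_lt_comm₀ (by positivity) (by norm_num)]; linarith
  norm_num at *; linarith


lemma image_bound {F : ℂ} (h0 : F ≠ 0) (h2 : F ≠ 2)
    (hlog : ‖Complex.log (F / (2 - F))‖ < 1) :
    ‖F - 1‖ < 0.7 := by
  have h2F : (2 : ℂ) - F ≠ 0 := sub_ne_zero.mpr (Ne.symm h2)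
  set u := Complex.log (F / (2 - F)) with hu
  have hexp : Complex.exp u = F / (2 - F) := Complex.exp_log (div_ne_zero h0 h2F)
  set E := Complex.exp u with hE
  have hEF : E * (2 - F) = F := by rw [hexp]; field_simp
  have hden : E + 1 ≠ 0 := by
    intro h
    have : E = -1 := by linear_combination h
    rw [this] at hEF
    have : (2:ℂ) = 0 := by linear_combination -hEF
    norm_num at this
  have key : F - 1 = (E - 1) / (E + 1) := by
    field_simp
    linear_combination -hEF
  -- real and imaginary parts of u
  set x := u.re with hx
  set y := u.im with hy
  have hxb : |x| < 1 := lt_of_le_of_lt (Complex.abs_re_le_norm u) hlog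
  have hyb : |y| < 1 := lt_of_le_of_lt (Complex.abs_im_le_norm u) hlog
  -- normSq computations
  have hEre : E.re = Real.exp x * Real.cos y := Complex.exp_re u
  have hEim : E.im = Real.exp x * Real.sin y := Complex.exp_im u
  have hcosh : Real.cosh x < 1.54309 := by
    calc Real.cosh x = Real.cosh |x| := (Real.cosh_abs x).symm
    _ ≤ Real.cosh 1 := by
        rw [Real.cosh_le_cosh]
        simpa using hxb.le
    _ < 1.54309 := cosh_one_lt
  have hcos : Real.cos 1 < Real.cos y := by
    have h1 : Real.cos 1 < Real.cos |y| :=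
      Real.cos_lt_cos_of_nonneg_of_le_pi (abs_nonneg y)
        (by linarith [Real.pi_gt_three]) hyb
    rwa [Real.cos_abs] at h1
  have hcosy : 0.5402 < Real.cos y := lt_trans cos_one_gt hcos
  -- main inequality: normSq (E-1) < 0.49 * normSq (E+1)
  have hns : Complex.normSq (E - 1) < 0.49 * Complex.normSq (E + 1) := by
    simp only [Complex.normSq_apply, Complex.sub_re, Complex.sub_im, Complex.add_re,
      Complex.add_im, Complex.one_re, Complex.one_im, hEre, hEim]
    have hsc : Real.sin y ^ 2 + Real.cos y ^ 2 = 1 := Real.sin_sq_add_cos_sq y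
    have hex : Real.exp x > 0 := Real.exp_pos x
    have hch : Real.exp x + Real.exp (-x) = 2 * Real.cosh x := by
      rw [Real.cosh_eq]; ring
    have hee : Real.exp x * Real.exp (-x) = 1 := by
      rw [← Real.exp_add]; simp
    nlinarith [hcosh, hcosy, hex, sq_nonneg (Real.exp x), mul_pos hex hex]
  have habs : ‖F - 1‖ ^ 2 < 0.49 := by
    rw [key, norm_div]
    rw [div_pow, div_lt_iff₀ (pow_pos (norm_pos_iff.mpr hden) 2)]
    rw [Complex.sq_norm, Complex.sq_norm]
    exact hns
  nlinarith [norm_nonneg (F - 1), habs]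


lemma sq_le_sinh_sq (y : ℝ) : y ^ 2 ≤ Real.sinh y ^ 2 := by
  rcases eq_or_ne y 0 with h | h
  · simp [h]
  · have h1 : |y| < Real.sinh |y| := Real.self_lt_sinh_iff.mpr (abs_pos.mpr h)
    have h2 : Real.sinh |y| = |Real.sinh y| := (Real.abs_sinh y).symm
    nlinarith [abs_nonneg y, _root_.sq_abs y, _root_.sq_abs (Real.sinh y)]

lemma sq_sub_sin_sq {a : ℝ} (h0 : 0 ≤ a) (h1 : a ≤ 1) :
    a ^ 2 - Real.sin a ^ 2 ≤ 1 - Real.sin 1 ^ 2 := by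
  have hs1 : Real.sin a ≤ a := Real.sin_le h0
  have hs2 : Real.sin 1 - Real.sin a ≤ 1 - a := by
    have hss : Real.sin 1 - Real.sin a =
        2 * Real.sin ((1 - a) / 2) * Real.cos ((1 + a) / 2) := Real.sin_sub_sin 1 a
    have hb1 : Real.sin ((1 - a) / 2) ≤ (1 - a) / 2 := Real.sin_le (by linarith)
    have hb2 : Real.sin ((1 - a) / 2) ≥ 0 := Real.sin_nonneg_of_nonneg_of_le_pi
      (by linarith) (by linarith [Real.pi_gt_three])
    have hb3 : Real.cos ((1 + a) / 2) ≤ 1 := Real.cos_le_one _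
    have hb4 : 0 ≤ Real.cos ((1 + a) / 2) := Real.cos_nonneg_of_mem_Icc
      ⟨by linarith [Real.pi_gt_three], by linarith [Real.pi_gt_three]⟩
    nlinarith
  have hsa : 0 ≤ Real.sin a := Real.sin_nonneg_of_nonneg_of_le_pi h0
    (by linarith [Real.pi_gt_three])
  have hs1' : Real.sin a ≤ Real.sin 1 :=
    Real.sin_le_sin_of_le_of_le_pi_div_two (by linarith [Real.pi_gt_three])
      (by linarith [Real.pi_gt_three]) h1
  nlinarith [Real.sin_le (le_refl (0:ℝ))]

lemma boundary_sin {w : ℂ} (hw : ‖w‖ = 1) : 0.72 < ‖Complex.sin w‖ := by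
  set x := w.re
  set y := w.im
  have hxy : x ^ 2 + y ^ 2 = 1 := by
    have h1 : Complex.normSq w = 1 := by rw [← Complex.sq_norm, hw]; norm_num
    rw [Complex.normSq_apply] at h1
    nlinarith [h1]
  have hsin : Complex.sin w = (Real.sin x * Real.cosh y : ℝ) + (Real.cos x * Real.sinh y : ℝ) * Complex.I := by
    rw [Complex.sin_eq]
    rw [← Complex.ofReal_sin, ← Complex.ofReal_cos, ← Complex.ofReal_sinh, ← Complex.ofReal_cosh]
    push_cast
    ring
  have hns : Complex.normSq (Complex.sin w) = Real.sin x ^ 2 + Real.sinh y ^ 2 := by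
    rw [hsin]
    rw [Complex.normSq_add_mul_I]
    have hc : Real.cosh y ^ 2 = Real.sinh y ^ 2 + 1 := Real.cosh_sq y
    have hsc : Real.sin x ^ 2 + Real.cos x ^ 2 = 1 := Real.sin_sq_add_cos_sq x
    ring_nf
    nlinarith [hc, hsc]
  have hxabs : |x| ≤ 1 := by nlinarith [_root_.sq_abs x, sq_nonneg y, abs_nonneg x]
  have hkey : Real.sin 1 ^ 2 ≤ Real.sin x ^ 2 + Real.sinh y ^ 2 := by
    have h1 : |x| ^ 2 - Real.sin |x| ^ 2 ≤ 1 - Real.sin 1 ^ 2 :=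
      sq_sub_sin_sq (abs_nonneg x) hxabs
    have h2 : Real.sin |x| ^ 2 = Real.sin x ^ 2 := by
      rcases abs_choice x with h | h <;> rw [h] <;> simp [Real.sin_neg]
    have h3 : y ^ 2 ≤ Real.sinh y ^ 2 := sq_le_sinh_sq y
    nlinarith [_root_.sq_abs x]
  have hfin : (0.72 : ℝ) ^ 2 < Complex.normSq (Complex.sin w) := by
    rw [hns]
    nlinarith [sin_one_gt, hkey]
  nlinarith [Complex.sq_norm (Complex.sin w), norm_nonneg (Complex.sin w)]

lemma cos_ne_zero_of_ball {w : ℂ} (hw : w ∈ ball (0:ℂ) 1) : Complex.cos w ≠ 0 := by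
  intro h
  rcases Complex.cos_eq_zero_iff.mp h with ⟨k, hk⟩
  have habs : ‖w‖ = |2 * (k:ℝ) + 1| * (Real.pi / 2) := by
    have : w = (((2 * (k:ℝ) + 1) * (Real.pi / 2) : ℝ) : ℂ) := by
      rw [hk]; push_cast; ring
    rw [this, Complex.norm_real, Real.norm_eq_abs, abs_mul, abs_of_pos (by positivity : (0:ℝ) < Real.pi / 2)]
  have hk1 : (1:ℝ) ≤ |2 * (k:ℝ) + 1| := by
    have h2 : (1:ℤ) ≤ |2*k+1| := by
      rcases le_or_gt 0 k with h | h
      · rw [_root_.abs_of_nonneg (by omega : (0:ℤ) ≤ 2*k+1)]; omega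
      · rw [_root_.abs_of_neg (by omega : (2*k+1:ℤ) < 0)]; omega
    calc (1:ℝ) = ((1:ℤ):ℝ) := by norm_num
    _ ≤ ((|2*k+1| : ℤ) : ℝ) := by exact_mod_cast h2
    _ = |2 * (k:ℝ) + 1| := by push_cast; norm_num
  have : ‖w‖ < 1 := by simpa using hw
  rw [habs] at this
  nlinarith [Real.pi_gt_three]

lemma ball_subset_sin_image : ball (0:ℂ) 0.72 ⊆ Complex.sin '' ball (0:ℂ) 1 := by
  set S := Complex.sin '' ball (0:ℂ) 1 with hS
  set K := Complex.sin '' closedBall (0:ℂ) 1 with hK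
  have hSopen : IsOpen S := by
    rw [isOpen_iff_mem_nhds]
    rintro v ⟨w, hw, rfl⟩
    have hmap : Filter.map Complex.sin (nhds w) = nhds (Complex.sin w) :=
      (Complex.hasStrictDerivAt_sin w).map_nhds_eq (cos_ne_zero_of_ball hw)
    rw [← hmap]
    exact Filter.image_mem_map (isOpen_ball.mem_nhds hw)
  have hKcl : IsClosed K :=
    ((isCompact_closedBall (0:ℂ) 1).image Complex.continuous_sin).isClosed
  have hBK : ∀ v ∈ ball (0:ℂ) 0.72, v ∈ K → v ∈ S := by
    rintro v hv ⟨w, hw, rfl⟩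
    refine ⟨w, ?_, rfl⟩
    rcases lt_or_eq_of_le (mem_closedBall_iff_norm.mp hw) with h | h
    · simpa [mem_ball_iff_norm] using h
    · exfalso
      have hb : 0.72 < ‖Complex.sin w‖ := by
        apply boundary_sin
        simpa [Complex.norm_def] using h
      have : ‖Complex.sin w‖ < 0.72 := by
        simpa [mem_ball_zero_iff] using hv
      linarith
  intro v hv
  by_contra hvS
  have hconn : IsPreconnected (ball (0:ℂ) 0.72) := (convex_ball (0:ℂ) 0.72).isPreconnected
  have hsub : ball (0:ℂ) 0.72 ⊆ S ∪ Kᶜ := by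
    intro a ha
    by_cases haK : a ∈ K
    · exact Or.inl (hBK a ha haK)
    · exact Or.inr haK
  have hne1 : (ball (0:ℂ) 0.72 ∩ S).Nonempty := by
    refine ⟨0, ?_, ⟨0, by simp, by simp⟩⟩
    simp; norm_num
  have hne2 : (ball (0:ℂ) 0.72 ∩ Kᶜ).Nonempty := by
    refine ⟨v, hv, fun hvK => hvS (hBK v hv hvK)⟩
  obtain ⟨a, ha, haS, haK⟩ := hconn S Kᶜ hSopen hKcl.isOpen_compl hsub hne1 hne2
  exact haK (Set.image_mono ball_subset_closedBall haS)

lemma stepA {p : ℂ → ℂ} (hp : AnalyticOnNhd ℂ p (ball 0 1)) {β₁ β₂ : ℝ}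
    (hβ₂ : 0 < β₂) (hβ : β₂ < β₁)
    (habs : ∀ w ∈ ball (0:ℂ) 1,
      ‖(β₁:ℂ) * w * deriv p w + (β₂:ℂ) * w ^ 2 * deriv (deriv p) w‖
        ≤ 0.7 * ‖w‖) :
    ∀ z ∈ ball (0:ℂ) 1, ‖z * deriv p z‖ ≤ 0.7 / β₁ * ‖z‖ := by
  intro z hz
  rcases eq_or_ne z 0 with rfl | hz0
  · simp
  set κ := β₁ / β₂ with hκdef
  have hκ : 1 < κ := (one_lt_div hβ₂).mpr hβ
  have hκ0 : 0 < κ := lt_trans one_pos hκ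
  set q := deriv p with hqdef
  set q2 := deriv q with hq2def
  have hq : AnalyticOnNhd ℂ q (ball 0 1) := hp.deriv
  have hq2 : AnalyticOnNhd ℂ q2 (ball 0 1) := hq.deriv
  have hzlt : ‖z‖ < 1 := by simpa [mem_ball_zero_iff] using hz
  have hmem : ∀ s : ℝ, s ∈ Set.Icc (0:ℝ) 1 → (s:ℂ) * z ∈ ball (0:ℂ) 1 := by
    intro s hs
    rw [mem_ball_zero_iff]
    simp only [norm_mul, Complex.norm_real, Real.norm_eq_abs]
    calc |s| * ‖z‖ ≤ 1 * ‖z‖ := by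
          apply mul_le_mul_of_nonneg_right _ (norm_nonneg z)
          rw [_root_.abs_of_nonneg hs.1]; exact hs.2
    _ < 1 := by rw [one_mul]; exact hzlt
  -- the functions
  set ψ : ℝ → ℂ := fun s => ((s ^ κ : ℝ) : ℂ) * (z * q ((s:ℂ) * z)) with hψdef
  set g : ℝ → ℂ := fun s =>
      ((κ * s ^ (κ - 1) : ℝ) : ℂ) * (z * q ((s:ℂ) * z))
        + ((s ^ κ : ℝ) : ℂ) * (z * (q2 ((s:ℂ) * z) * z)) with hgdef
  -- continuity of building blocks
  have hlinc : Continuous fun s : ℝ => (s:ℂ) * z := by continuity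
  have hqc : ContinuousOn (fun s : ℝ => q ((s:ℂ) * z)) (Set.Icc 0 1) := by
    apply (hq.continuousOn).comp hlinc.continuousOn
    intro s hs; exact hmem s hs
  have hq2c : ContinuousOn (fun s : ℝ => q2 ((s:ℂ) * z)) (Set.Icc 0 1) := by
    apply (hq2.continuousOn).comp hlinc.continuousOn
    intro s hs; exact hmem s hs
  have hrpowc : ∀ r : ℝ, 0 ≤ r → Continuous (fun s : ℝ => s ^ r) := by
    intro r hr
    rw [continuous_iff_continuousAt]
    exact fun x => Real.continuousAt_rpow_const x r (Or.inr hr)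
  have hψc : ContinuousOn ψ (Set.Icc 0 1) := by
    apply ContinuousOn.mul
    · exact (Complex.continuous_ofReal.comp (hrpowc κ hκ0.le)).continuousOn
    · exact continuousOn_const.mul hqc
  have hgc : ContinuousOn g (Set.Icc 0 1) := by
    apply ContinuousOn.add
    · exact ((Complex.continuous_ofReal.comp
        ((continuous_const.mul (hrpowc (κ-1) (by linarith))))).continuousOn).mul
        (continuousOn_const.mul hqc)
    · exact ((Complex.continuous_ofReal.comp (hrpowc κ hκ0.le)).continuousOn).mul
        (continuousOn_const.mul (hq2c.mul continuousOn_const))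
  -- derivative
  have hderiv : ∀ s ∈ Set.Ioo (0:ℝ) 1, HasDerivAt ψ (g s) s := by
    intro s hs
    have hs0 : s ≠ 0 := ne_of_gt hs.1
    have h1 : HasDerivAt (fun s : ℝ => ((s ^ κ : ℝ) : ℂ)) ((κ * s ^ (κ - 1) : ℝ) : ℂ) s :=
      (Real.hasDerivAt_rpow_const (Or.inl hs0)).ofReal_comp
    have hlin : HasDerivAt (fun s : ℝ => (s:ℂ) * z) z s := by
      simpa using (Complex.ofRealCLM.hasDerivAt (x := s)).mul_const z
    have hsz : (s:ℂ) * z ∈ ball (0:ℂ) 1 := hmem s ⟨hs.1.le, hs.2.le⟩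
    have hqd : HasDerivAt q (q2 ((s:ℂ) * z)) ((s:ℂ) * z) :=
      ((hq _ hsz).differentiableAt).hasDerivAt
    have hcomp : HasDerivAt (fun s : ℝ => q ((s:ℂ) * z)) (z • q2 ((s:ℂ)*z)) s :=
      by have := HasDerivAt.scomp s hqd hlin; exact this
    have h2 : HasDerivAt (fun s : ℝ => z * q ((s:ℂ) * z)) (z * (q2 ((s:ℂ)*z) * z)) s := by
      have := hcomp.const_mul z
      simpa [smul_eq_mul, mul_comm, mul_assoc, mul_left_comm] using this
    exact h1.mul h2
  -- integrability
  have hgint : IntervalIntegrable g MeasureTheory.volume 0 1 := by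
    apply ContinuousOn.intervalIntegrable
    rwa [Set.uIcc_of_le (by norm_num : (0:ℝ) ≤ 1)]
  -- FTC
  have hFTC : ∫ s in (0:ℝ)..1, g s = ψ 1 - ψ 0 :=
    integral_eq_sub_of_hasDeriv_right_of_le (by norm_num) hψc
      (fun s hs => (hderiv s hs).hasDerivWithinAt) hgint
  have hψ1 : ψ 1 = z * q z := by
    simp [hψdef, Real.one_rpow]
  have hψ0 : ψ 0 = 0 := by
    simp [hψdef, Real.zero_rpow (ne_of_gt hκ0)]
  -- bound the integral
  have hbound : ∀ s ∈ Set.Ioc (0:ℝ) 1,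
      ‖g s‖ ≤ (0.7 * ‖z‖ / β₂) * s ^ (κ - 1) := by
    intro s hs
    have hs0 : 0 < s := hs.1
    have hrw : g s = (((s ^ (κ - 2) : ℝ) : ℂ) / β₂) *
        ((β₁:ℂ) * ((s:ℂ)*z) * q ((s:ℂ)*z) + (β₂:ℂ) * ((s:ℂ)*z) ^ 2 * q2 ((s:ℂ)*z)) := by
      have e1 : (s:ℝ) ^ (κ - 1) = s ^ (κ - 2) * s := by
        rw [← Real.rpow_add_one (ne_of_gt hs0) (κ - 2)]; ring_nf
      have e2 : (s:ℝ) ^ κ = s ^ (κ - 2) * s * s := by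
        rw [← Real.rpow_add_one (ne_of_gt hs0) (κ - 2),
            ← Real.rpow_add_one (ne_of_gt hs0) (κ - 2 + 1)]
        ring_nf
      have hβ₂' : (β₂:ℂ) ≠ 0 := by exact_mod_cast ne_of_gt hβ₂
      have E1 : ((κ * s ^ (κ - 1) : ℝ) : ℂ) = (β₁:ℂ)/(β₂:ℂ) * (((s ^ (κ-2) : ℝ):ℂ) * (s:ℂ)) := by
        rw [e1, hκdef]; push_cast; ring
      have E2 : ((s ^ κ : ℝ) : ℂ) = ((s ^ (κ-2) : ℝ):ℂ) * (s:ℂ) * (s:ℂ) := by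
        rw [e2]; push_cast; ring
      show ((κ * s ^ (κ - 1) : ℝ) : ℂ) * (z * q ((s:ℂ) * z))
        + ((s ^ κ : ℝ) : ℂ) * (z * (q2 ((s:ℂ) * z) * z)) = _
      rw [E1, E2]
      field_simp
    rw [hrw]
    have hH := habs ((s:ℂ)*z) (hmem s ⟨hs0.le, hs.2⟩)
    have habs_sz : ‖(s:ℂ)*z‖ = s * ‖z‖ := by
      rw [norm_mul, Complex.norm_real, Real.norm_eq_abs, _root_.abs_of_nonneg hs0.le]
    rw [norm_mul]
    have h1 : ‖(((s ^ (κ - 2) : ℝ) : ℂ) / β₂)‖ = s ^ (κ - 2) / β₂ := by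
      simp only [norm_div, Complex.norm_real, Real.norm_eq_abs]
      rw [_root_.abs_of_nonneg (Real.rpow_nonneg hs0.le _), _root_.abs_of_pos hβ₂]
    rw [h1]
    calc s ^ (κ - 2) / β₂ * ‖(β₁:ℂ) * ((s:ℂ)*z) * q ((s:ℂ)*z) + (β₂:ℂ) * ((s:ℂ)*z) ^ 2 * q2 ((s:ℂ)*z)‖
        ≤ s ^ (κ - 2) / β₂ * (0.7 * (s * ‖z‖)) := by
          apply mul_le_mul_of_nonneg_left _ (by positivity)
          rw [show ‖(β₁:ℂ) * ((s:ℂ)*z) * q ((s:ℂ)*z) + (β₂:ℂ) * ((s:ℂ)*z) ^ 2 * q2 ((s:ℂ)*z)‖ =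
            ‖(β₁:ℂ) * ((s:ℂ)*z) * q ((s:ℂ)*z) + (β₂:ℂ) * ((s:ℂ)*z) ^ 2 * q2 ((s:ℂ)*z)‖ from rfl]
          rw [← habs_sz]
          exact hH
      _ = (0.7 * ‖z‖ / β₂) * (s ^ (κ - 2) * s) := by ring
      _ = (0.7 * ‖z‖ / β₂) * s ^ (κ - 1) := by
          rw [← Real.rpow_add_one (ne_of_gt hs0) (κ - 2)]; ring_nf
  have hGint : IntervalIntegrable (fun s : ℝ => (0.7 * ‖z‖ / β₂) * s ^ (κ - 1))
      MeasureTheory.volume 0 1 := by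
    apply ContinuousOn.intervalIntegrable
    apply Continuous.continuousOn
    exact continuous_const.mul (hrpowc (κ-1) (by linarith))
  have hval : ∫ s in (0:ℝ)..1, (0.7 * ‖z‖ / β₂) * s ^ (κ - 1)
      = (0.7 * ‖z‖ / β₂) * (1 / κ) := by
    rw [intervalIntegral.integral_const_mul]
    rw [integral_rpow (Or.inl (by linarith : (-1:ℝ) < κ - 1))]
    rw [show κ - 1 + 1 = κ by ring, Real.one_rpow, Real.zero_rpow (ne_of_gt hκ0)]
    ring
  have hnorm : ‖∫ s in (0:ℝ)..1, g s‖ ≤ |(0.7 * ‖z‖ / β₂) * (1 / κ)| := by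
    rw [← hval]
    apply intervalIntegral.norm_integral_le_abs_of_norm_le _ hGint
    rw [MeasureTheory.ae_restrict_iff' measurableSet_uIoc]
    apply MeasureTheory.ae_of_all
    intro s hs
    rw [Set.uIoc_of_le (by norm_num : (0:ℝ) ≤ 1)] at hs
    exact hbound s hs
  rw [hFTC, hψ1, hψ0, sub_zero] at hnorm
  have heq : |(0.7 * ‖z‖ / β₂) * (1 / κ)| = 0.7 / β₁ * ‖z‖ := by
    rw [_root_.abs_of_nonneg (by positivity)]
    rw [hκdef]; field_simp
  rw [heq] at hnorm
  exact hnorm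

theorem stmt2 (β₁ β₂ : ℝ) (hβ₁ : 0 < β₁) (hβ₂ : 0 < β₂)
    (r₀ : ℝ) (hr₀pos : 0 < r₀)
    (hr₀ : r₀ ^ 2 + 2 * (Real.cos 1 / Real.sin 1) * r₀ - 1 = 0)
    (hcond : nu0 * (β₁ + β₂ * nu1) ≥ r₀)
    (p : ℂ → ℂ) (hp : AnalyticOnNhd ℂ p (ball 0 1)) (hp0 : p 0 = 1)
    (hsub : ∀ z ∈ ball (0 : ℂ) 1,
      (1 + (β₁ : ℂ) * z * deriv p z + (β₂ : ℂ) * z ^ 2 * deriv (deriv p) z) ≠ 0 ∧ (1 + (β₁ : ℂ) * z * deriv p z + (β₂ : ℂ) * z ^ 2 * deriv (deriv p) z) ≠ 2 ∧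
        ‖Complex.log ((1 + (β₁ : ℂ) * z * deriv p z + (β₂ : ℂ) * z ^ 2 * deriv (deriv p) z) / (2 - (1 + (β₁ : ℂ) * z * deriv p z + (β₂ : ℂ) * z ^ 2 * deriv (deriv p) z)))‖ < 1) :
    ∀ z ∈ ball (0 : ℂ) 1, ∃ w ∈ ball (0 : ℂ) 1, p z = 1 + Complex.sin w := by
  -- basic positivity and numeric facts
  have hcos_pos : (0:ℝ) < Real.cos 1 := by linarith [cos_one_gt]
  have hsin_pos : (0:ℝ) < Real.sin 1 := by linarith [sin_one_gt]
  have hnu0 : nu0 = Real.cos 1 := by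
    rw [nu0, show (1:ℝ) - Real.sin 1 ^ 2 = Real.cos 1 ^ 2 by
      nlinarith [Real.sin_sq_add_cos_sq 1]]
    exact Real.sqrt_sq hcos_pos.le
  have hnu1 : nu1 = -(Real.sin 1 / Real.cos 1) := by
    rw [nu1]
    have h2 : Real.sin 2 = 2 * Real.sin 1 * Real.cos 1 := by
      have := Real.sin_two_mul 1
      norm_num at this
      linarith
    have h3 : 1 + Real.cos 2 = 2 * Real.cos 1 ^ 2 := by
      have := Real.cos_two_mul 1
      norm_num at this
      linarith
    rw [h2, h3]
    field_simp
  have hβkey : Real.cos 1 * β₁ - β₂ * Real.sin 1 ≥ r₀ := by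
    have h := hcond
    rw [hnu0, hnu1] at h
    have hexp : Real.cos 1 * (β₁ + β₂ * -(Real.sin 1 / Real.cos 1))
        = Real.cos 1 * β₁ - β₂ * Real.sin 1 := by
      field_simp
      ring
    linarith [h, hexp.symm.le, hexp.le]
  have hr053 : (0.53:ℝ) < r₀ := by
    by_contra hle
    push_neg at hle
    have hcot : Real.cos 1 / Real.sin 1 < 0.6422 := by
      rw [div_lt_iff₀ hsin_pos]
      nlinarith [cos_one_lt, sin_one_gt]
    have hcotpos : 0 ≤ Real.cos 1 / Real.sin 1 := div_nonneg hcos_pos.le hsin_pos.le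
    nlinarith [hr₀, hr₀pos, hcot, hle, hcotpos]
  have hβ₁gt : (0.98:ℝ) < β₁ := by
    nlinarith [hβkey, hr053, cos_one_lt, mul_pos hβ₂ hsin_pos, hcos_pos]
  have hββ : β₂ < β₁ := by
    nlinarith [hβkey, hr₀pos, mul_pos hβ₂ hsin_pos, cos_one_lt, sin_one_gt, hβ₂, hcos_pos]
  -- the auxiliary function h and the Schwarz lemma
  set h : ℂ → ℂ := fun w => (β₁:ℂ) * w * deriv p w + (β₂:ℂ) * w ^ 2 * deriv (deriv p) w
    with hhdef
  have hh0 : h 0 = 0 := by simp [hhdef]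
  have hhan : AnalyticOnNhd ℂ h (ball 0 1) := by
    apply AnalyticOnNhd.add
    · exact (analyticOnNhd_const.mul analyticOnNhd_id).mul hp.deriv
    · exact (analyticOnNhd_const.mul (analyticOnNhd_id.pow 2)).mul hp.deriv.deriv
  have hmaps : Set.MapsTo h (ball 0 1) (ball (h 0) 0.7) := by
    intro w hw
    rw [hh0, mem_ball_zero_iff]
    obtain ⟨hF0, hF2, hFlog⟩ := hsub w hw
    have hib := image_bound hF0 hF2 hFlog
    have : (1 + (β₁:ℂ) * w * deriv p w + (β₂:ℂ) * w ^ 2 * deriv (deriv p) w) - 1 = h w := by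
      rw [hhdef]; ring
    rwa [this] at hib
  have hschwarz : ∀ w ∈ ball (0:ℂ) 1,
      ‖(β₁:ℂ) * w * deriv p w + (β₂:ℂ) * w ^ 2 * deriv (deriv p) w‖
        ≤ 0.7 * ‖w‖ := by
    intro w hw
    have hd := Complex.dist_le_div_mul_dist_of_mapsTo_ball hhan.differentiableOn (hmaps.mono_right ball_subset_closedBall) hw
    rw [hh0, dist_zero_right, dist_zero_right] at hd
    simpa [hhdef] using hd
  have hA := stepA hp hβ₂ hββ hschwarz
  -- conclusion for each z
  intro z hz
  have hzlt : ‖z‖ < 1 := by simpa [mem_ball_zero_iff] using hz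
  have hmem : ∀ t : ℝ, t ∈ Set.Icc (0:ℝ) 1 → (t:ℂ) * z ∈ ball (0:ℂ) 1 := by
    intro t ht
    rw [mem_ball_zero_iff]
    simp only [norm_mul, Complex.norm_real, Real.norm_eq_abs]
    calc |t| * ‖z‖ ≤ 1 * ‖z‖ := by
          apply mul_le_mul_of_nonneg_right _ (norm_nonneg z)
          rw [_root_.abs_of_nonneg ht.1]; exact ht.2
    _ < 1 := by rw [one_mul]; exact hzlt
  -- step B : FTC for p along the segment
  have hder : ∀ t ∈ Set.uIcc (0:ℝ) 1,
      HasDerivAt (fun t : ℝ => p ((t:ℂ) * z)) (z * deriv p ((t:ℂ) * z)) t := by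
    intro t ht
    rw [Set.uIcc_of_le (by norm_num : (0:ℝ) ≤ 1)] at ht
    have hlin : HasDerivAt (fun t : ℝ => (t:ℂ) * z) z t := by
      simpa using (Complex.ofRealCLM.hasDerivAt (x := t)).mul_const z
    have hpd : HasDerivAt p (deriv p ((t:ℂ) * z)) ((t:ℂ) * z) :=
      ((hp _ (hmem t ht)).differentiableAt).hasDerivAt
    have := HasDerivAt.scomp t hpd hlin
    simpa [smul_eq_mul, mul_comm, Function.comp_def] using this
  have hcont : IntervalIntegrable (fun t : ℝ => z * deriv p ((t:ℂ) * z))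
      MeasureTheory.volume 0 1 := by
    apply ContinuousOn.intervalIntegrable
    rw [Set.uIcc_of_le (by norm_num : (0:ℝ) ≤ 1)]
    apply ContinuousOn.mul continuousOn_const
    apply (hp.deriv.continuousOn).comp (by continuity : Continuous fun t : ℝ => (t:ℂ)*z).continuousOn
    intro t ht; exact hmem t ht
  have hFTCB : ∫ t in (0:ℝ)..1, z * deriv p ((t:ℂ) * z) = p z - p 0 := by
    have := intervalIntegral.integral_eq_sub_of_hasDerivAt hder hcont
    simpa using this
  have hbnd : ∀ t ∈ Set.uIoc (0:ℝ) 1, ‖z * deriv p ((t:ℂ) * z)‖ ≤ 0.7 / β₁ * ‖z‖ := by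
    intro t ht
    rw [Set.uIoc_of_le (by norm_num : (0:ℝ) ≤ 1)] at ht
    have ht0 : 0 < t := ht.1
    have hAt := hA ((t:ℂ) * z) (hmem t ⟨ht0.le, ht.2⟩)
    have e1 : ‖(t:ℂ) * z * deriv p ((t:ℂ) * z)‖
        = t * ‖z * deriv p ((t:ℂ) * z)‖ := by
      rw [mul_assoc, norm_mul, Complex.norm_real, Real.norm_eq_abs, _root_.abs_of_pos ht0, norm_mul]
    have e2 : ‖(t:ℂ) * z‖ = t * ‖z‖ := by
      rw [norm_mul, Complex.norm_real, Real.norm_eq_abs, _root_.abs_of_pos ht0]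
    rw [e1, e2] at hAt
    have : t * ‖z * deriv p ((t:ℂ) * z)‖ ≤ t * (0.7 / β₁ * ‖z‖) := by
      calc t * ‖z * deriv p ((t:ℂ) * z)‖ ≤ 0.7 / β₁ * (t * ‖z‖) := hAt
      _ = t * (0.7 / β₁ * ‖z‖) := by ring
    exact le_of_mul_le_mul_left this ht0
  have hfinal : ‖p z - 1‖ ≤ 0.7 / β₁ * ‖z‖ := by
    have hn := intervalIntegral.norm_integral_le_of_norm_le_const hbnd
    rw [hFTCB, hp0] at hn
    simpa using hn
  have hball : p z - 1 ∈ ball (0:ℂ) 0.72 := by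
    rw [mem_ball_zero_iff]
    show ‖p z - 1‖ < 0.72
    have hβ₁pos : (0:ℝ) < β₁ := hβ₁
    have h1 : 0.7 / β₁ * ‖z‖ < 0.7 / β₁ * 1 := by
      apply mul_lt_mul_of_pos_left hzlt (by positivity)
    have h2 : 0.7 / β₁ < 0.72 := by
      rw [div_lt_iff₀ hβ₁pos]; nlinarith [hβ₁gt]
    calc ‖p z - 1‖ = ‖p z - 1‖ := rfl
    _ ≤ 0.7 / β₁ * ‖z‖ := hfinal
    _ < 0.72 := by nlinarith [h1, h2]
  obtain ⟨w, hw, hsw⟩ := ball_subset_sin_image hball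
  exact ⟨w, hw, by rw [hsw]; ring⟩
end

section
/- Let β₁, β₂ > 0 be real numbers satisfying 2ν₀(β₁ + β₂ν₁) ≥ π, where ν₀ = √(1 − sin²1) and ν₁ = −sin 2/(1 + cos 2). Let p be analytic on the open unit disk 𝔻 with p(0) = 1, and suppose that for every z ∈ 𝔻 the value 1 + β₁·z·p′(z) + β₂·z²·p″(z) lies in the set {1 + log(w + (1 + w²)^{1/2}) : w ∈ 𝔻} (principal branches of log and square root, i.e. the image of 𝔻 under 1 + sinh⁻¹ z). Then for every z ∈ 𝔻, p(z) ∈ {1 + sin w : w ∈ 𝔻}, i.e. p(z) ≺ 1 + sin z. -/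
open Metric

section SinSubordinationHelpers
open Complex Set intervalIntegral MeasureTheory
open scoped Interval
set_option maxHeartbeats 1000000

lemma log_le_two_sqrt_sub_one {x : ℝ} (hx : 0 < x) : Real.log x ≤ 2*(Real.sqrt x - 1) := by
  have h1 : Real.log x = 2 * Real.log (Real.sqrt x) := by
    rw [Real.log_sqrt hx.le]; ring
  have h2 : Real.log (Real.sqrt x) ≤ Real.sqrt x - 1 :=
    Real.log_le_sub_one_of_pos (Real.sqrt_pos.2 hx)
  linarith

lemma sqrt_two_lt : Real.sqrt 2 < 1.41422 := by
  rw [show (1.41422:ℝ) = |(1.41422:ℝ)| from (_root_.abs_of_nonneg (by norm_num)).symm, ← Real.sqrt_sq_eq_abs]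
  exact Real.sqrt_lt_sqrt (by norm_num) (by norm_num)

lemma asinh_bound (w : ℂ) (hw : ‖w‖ < 1) :
    ‖Complex.log (w + (1 + w ^ 2) ^ ((1 : ℂ)/2))‖ ≤ 1.923 := by
  have hsq2 : Real.sqrt 2 < 1.41422 := sqrt_two_lt
  have hsq2' : (0:ℝ) ≤ Real.sqrt 2 := Real.sqrt_nonneg 2
  set s : ℂ := 1 + w^2 with hs_def
  have habs_w2 : ‖w^2‖ < 1 := by
    rw [norm_pow]
    calc ‖w‖ ^ 2 ≤ ‖w‖ * 1 := by
          rw [pow_two]; exact mul_le_mul_of_nonneg_left hw.le (norm_nonneg w)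
      _ < 1 := by rw [mul_one]; exact hw
  have hre_w2 : -‖w^2‖ ≤ (w^2).re :=
    neg_le_of_abs_le (Complex.abs_re_le_norm _)
  have hs_re : 0 < s.re := by
    simp only [hs_def, add_re, one_re]
    linarith
  have hs0 : s ≠ 0 := by
    intro h; rw [h] at hs_re; simp at hs_re
  have habs_s_pos : 0 < ‖s‖ := norm_pos_iff.2 hs0
  have habs_s_le : ‖s‖ ≤ 2 := by
    calc ‖s‖ ≤ ‖1‖ + ‖w^2‖ := norm_add_le _ _
      _ ≤ 1 + 1 := by rw [norm_one]; linarith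
      _ = 2 := by norm_num
  set t : ℂ := s ^ ((1:ℂ)/2) with ht_def
  have ht2 : t * t = s := by
    rw [ht_def, ← Complex.cpow_add _ _ hs0]
    norm_num
  have habs_t : ‖t‖ = Real.sqrt (‖s‖) := by
    rw [ht_def, Complex.norm_cpow_of_ne_zero hs0]
    norm_num [Real.sqrt_eq_rpow]
  have ht_re : t.re = Real.sqrt ((‖s‖ + s.re)/2) := by
    rw [ht_def, Complex.cpow_def_of_ne_zero hs0, Complex.exp_re]
    have h1 : (Complex.log s * (1/2)).re = Real.log (‖s‖) / 2 := by
      simp [Complex.mul_re, Complex.log_re, Complex.log_im]; ring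
    have h2 : (Complex.log s * (1/2)).im = Complex.arg s / 2 := by
      simp [Complex.mul_im, Complex.log_re, Complex.log_im]; ring
    rw [h1, h2]
    rw [Real.cos_half (Complex.neg_pi_lt_arg s).le (Complex.arg_le_pi s)]
    rw [(show Real.exp (Real.log (‖s‖) / 2) = Real.sqrt (‖s‖) by
      rw [← Real.log_sqrt habs_s_pos.le, Real.exp_log (Real.sqrt_pos.2 habs_s_pos)])]
    rw [← Real.sqrt_mul habs_s_pos.le]
    congr 1
    rw [Complex.cos_arg hs0]
    field_simp
  have hw_sq : w.re^2 + w.im^2 < 1 := by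
    have : ‖w‖ ^ 2 < 1 := by
      calc ‖w‖ ^ 2 ≤ ‖w‖ * 1 := by
            rw [pow_two]; exact mul_le_mul_of_nonneg_left hw.le (norm_nonneg w)
        _ < 1 := by rw [mul_one]; exact hw
    rwa [Complex.sq_norm, Complex.normSq_apply, ← pow_two, ← pow_two] at this
  have ht_re_nonneg : 0 ≤ t.re := ht_re ▸ Real.sqrt_nonneg _
  have ht_re_ge : |w.re| ≤ t.re := by
    have h1 : w.re^2 ≤ (‖s‖ + s.re)/2 := by
      have hre_s : s.re = 1 + (w.re^2 - w.im^2) := by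
        simp [hs_def, Complex.add_re, Complex.one_re, pow_two, Complex.mul_re]
      nlinarith [habs_s_pos.le]
    calc |w.re| = Real.sqrt (w.re^2) := (Real.sqrt_sq_eq_abs _).symm
      _ ≤ Real.sqrt ((‖s‖ + s.re)/2) := Real.sqrt_le_sqrt h1
      _ = t.re := ht_re.symm
  set ζ : ℂ := w + t with hζ_def
  have hζ_re : 0 ≤ ζ.re := by
    have : -|w.re| ≤ w.re := neg_abs_le _
    simp only [hζ_def, add_re]; linarith
  have hζ1 : (t - w) * ζ = 1 := by
    have : (t - w) * (w + t) = t*t - w*w := by ring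
    rw [hζ_def, this, ht2, hs_def]; ring
  have hζ0 : ζ ≠ 0 := by
    intro h; rw [h, mul_zero] at hζ1; exact one_ne_zero hζ1.symm
  have habs_t_le : ‖t‖ ≤ Real.sqrt 2 := by
    rw [habs_t]; exact Real.sqrt_le_sqrt habs_s_le
  have habs_ζ_ub : ‖ζ‖ ≤ 1 + Real.sqrt 2 := by
    calc ‖ζ‖ ≤ ‖w‖ + ‖t‖ := norm_add_le _ _
      _ ≤ 1 + Real.sqrt 2 := by
        have : ‖w‖ < 1 := hw
        linarith
  have habs_ζ_lb : Real.sqrt 2 - 1 ≤ ‖ζ‖ := by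
    have h1 : ‖t - w‖ * ‖ζ‖ = 1 := by
      rw [← norm_mul, hζ1, norm_one]
    have h2 : ‖t - w‖ ≤ Real.sqrt 2 + 1 := by
      have h3 : ‖t-w‖ ≤ ‖t‖ + ‖w‖ := by
        calc ‖t-w‖ ≤ ‖t‖ + ‖-w‖ := by
              rw [sub_eq_add_neg]; exact norm_add_le _ _
          _ = ‖t‖ + ‖w‖ := by rw [norm_neg]
      have : ‖w‖ < 1 := hw
      linarith
    have h4 : 0 < ‖t - w‖ := by
      have : t - w ≠ 0 := by
        intro h
        rw [h, zero_mul] at hζ1; exact one_ne_zero hζ1.symm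
      exact norm_pos_iff.2 this
    have hs2 : Real.sqrt 2 * Real.sqrt 2 = 2 := Real.mul_self_sqrt (by norm_num)
    nlinarith [norm_nonneg ζ]
  -- final numeric assembly
  have hlog_re : (Complex.log ζ).re = Real.log (‖ζ‖) := Complex.log_re ζ
  have hlog_im : (Complex.log ζ).im = Complex.arg ζ := Complex.log_im ζ
  have harg : |Complex.arg ζ| ≤ Real.pi / 2 := Complex.abs_arg_le_pi_div_two_iff.2 hζ_re
  have hpi : Real.pi ≤ 3.1416 := by
    linarith [Real.pi_lt_d6]
  have hlog_ub : Real.log (‖ζ‖) ≤ 1.108 := by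
    have h1 : Real.log (‖ζ‖) ≤ Real.log (1 + Real.sqrt 2) :=
      Real.log_le_log (norm_pos_iff.2 hζ0) habs_ζ_ub
    have h2 : Real.log (1 + Real.sqrt 2) ≤ 2*(Real.sqrt (1+Real.sqrt 2) - 1) :=
      log_le_two_sqrt_sub_one (by linarith)
    have h3 : Real.sqrt (1 + Real.sqrt 2) ≤ 1.554 := by
      rw [show (1.554:ℝ) = |(1.554:ℝ)| from (_root_.abs_of_nonneg (by norm_num)).symm, ← Real.sqrt_sq_eq_abs]
      apply Real.sqrt_le_sqrt; nlinarith
    linarith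
  have hlog_lb : -1.108 ≤ Real.log (‖ζ‖) := by
    have h0 : (0:ℝ) < Real.sqrt 2 - 1 := by nlinarith [Real.mul_self_sqrt (show (0:ℝ) ≤ 2 by norm_num)]
    have h1 : Real.log (Real.sqrt 2 - 1) ≤ Real.log (‖ζ‖) :=
      Real.log_le_log h0 habs_ζ_lb
    have hs2 : Real.sqrt 2 * Real.sqrt 2 = 2 := Real.mul_self_sqrt (by norm_num)
    have hmul : (Real.sqrt 2 - 1) * (Real.sqrt 2 + 1) = 1 := by
      rw [show (Real.sqrt 2 - 1) * (Real.sqrt 2 + 1) = Real.sqrt 2 * Real.sqrt 2 - 1 by ring, hs2]; norm_num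
    have h2 : Real.log (Real.sqrt 2 - 1) = - Real.log (Real.sqrt 2 + 1) := by
      rw [eq_inv_of_mul_eq_one_left hmul, Real.log_inv]
    have h3 : Real.log (Real.sqrt 2 + 1) ≤ 2*(Real.sqrt (Real.sqrt 2 + 1) - 1) :=
      log_le_two_sqrt_sub_one (by linarith)
    have h4 : Real.sqrt (Real.sqrt 2 + 1) ≤ 1.554 := by
      rw [show (1.554:ℝ) = |(1.554:ℝ)| from (_root_.abs_of_nonneg (by norm_num)).symm, ← Real.sqrt_sq_eq_abs]
      apply Real.sqrt_le_sqrt; nlinarith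
    linarith
  have hnorm_sq : ‖Complex.log ζ‖^2 = (Real.log (‖ζ‖))^2 + (Complex.arg ζ)^2 := by
    rw [Complex.sq_norm (Complex.log ζ), Complex.normSq_apply, hlog_re, hlog_im]
    ring
  have hpi_pos : (0:ℝ) < Real.pi := Real.pi_pos
  have h5 : ‖Complex.log ζ‖^2 ≤ 1.923^2 := by
    rw [hnorm_sq]
    have ha2 : (Complex.arg ζ)^2 ≤ (Real.pi/2)^2 := by
      rw [← _root_.sq_abs]
      apply pow_le_pow_left₀ (abs_nonneg _) harg
    have hl2 : (Real.log (‖ζ‖))^2 ≤ 1.108^2 := by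
      rw [← _root_.sq_abs]
      apply pow_le_pow_left₀ (abs_nonneg _)
      rw [abs_le]; exact ⟨hlog_lb, hlog_ub⟩
    nlinarith
  calc ‖Complex.log ζ‖ = Real.sqrt (‖Complex.log ζ‖^2) := by
        rw [Real.sqrt_sq (norm_nonneg _)]
    _ ≤ Real.sqrt (1.923^2) := Real.sqrt_le_sqrt h5
    _ = 1.923 := by rw [Real.sqrt_sq]; norm_num


lemma sin_lower (w : ℂ) (hw : ‖w‖ ≤ 1) : Real.sin ‖w‖ ≤ ‖Complex.sin w‖ := by
  set x := w.re; set y := w.im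
  have hsin : Complex.sin w = (↑(Real.sin x * Real.cosh y) : ℂ) + ↑(Real.cos x * Real.sinh y) * I := by
    rw [Complex.sin_eq]
    push_cast [Complex.ofReal_sin, Complex.ofReal_cos, Complex.ofReal_sinh, Complex.ofReal_cosh]
    ring
  have hnormsq : ‖Complex.sin w‖^2 = (Real.sin x * Real.cosh y)^2 + (Real.cos x * Real.sinh y)^2 := by
    rw [hsin, Complex.sq_norm, Complex.normSq_apply]
    simp [Complex.add_re, Complex.add_im, Complex.mul_re, Complex.mul_im,
      Complex.sin_ofReal_re, Complex.cos_ofReal_re, Complex.sinh_ofReal_re, Complex.cosh_ofReal_re]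
    ring
  have hid : (Real.sin x * Real.cosh y)^2 + (Real.cos x * Real.sinh y)^2
      = Real.sin x ^2 + Real.sinh y ^2 := by
    have h1 : Real.cosh y ^2 = 1 + Real.sinh y ^2 := Real.cosh_sq' y
    have h2 : Real.cos x ^2 = 1 - Real.sin x ^2 := Real.cos_sq' x
    nlinarith [Real.sin_sq_add_cos_sq x]
  have hsinh : y^2 ≤ Real.sinh y ^2 := by
    rcases le_or_gt 0 y with h|h
    · rcases eq_or_lt_of_le h with h'|h'
      · rw [← h']; simp
      · nlinarith [(Real.self_lt_sinh_iff.2 h').le]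
    · have h2 : -y < Real.sinh (-y) := Real.self_lt_sinh_iff.2 (by linarith)
      rw [Real.sinh_neg] at h2
      nlinarith
  set r := ‖w‖ with hr
  have hr_nonneg : 0 ≤ r := norm_nonneg w
  have hxy : x^2 + y^2 = r^2 := by
    rw [hr, Complex.sq_norm, Complex.normSq_apply]; ring
  set a := |x| with ha
  have ha_nonneg : 0 ≤ a := abs_nonneg x
  have har : a ≤ r := by
    rw [ha]
    have : x^2 ≤ r^2 := by nlinarith
    calc |x| = Real.sqrt (x^2) := (Real.sqrt_sq_eq_abs x).symm
      _ ≤ Real.sqrt (r^2) := Real.sqrt_le_sqrt this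
      _ = r := Real.sqrt_sq hr_nonneg
  have hsin_even : Real.sin x ^2 = Real.sin a ^2 := by
    rcases abs_choice x with h|h
    · rw [ha, h]
    · rw [ha, h, Real.sin_neg]; ring
  -- sin r - sin a ≤ r - a  and  sin r + sin a ≤ r + a
  have hpi : (3:ℝ) < Real.pi := Real.pi_gt_three
  have hd : Real.sin r - Real.sin a ≤ r - a := by
    rw [Real.sin_sub_sin]
    have h1 : Real.sin ((r-a)/2) ≤ (r-a)/2 := Real.sin_le (by linarith)
    have h2 : Real.cos ((r+a)/2) ≤ 1 := Real.cos_le_one _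
    have hs0 : 0 ≤ Real.sin ((r-a)/2) :=
      Real.sin_nonneg_of_nonneg_of_le_pi (by linarith) (by linarith)
    nlinarith
  have hsum : Real.sin r + Real.sin a ≤ r + a := by
    have := Real.sin_le hr_nonneg
    have := Real.sin_le ha_nonneg
    linarith
  have hsr0 : 0 ≤ Real.sin r := Real.sin_nonneg_of_nonneg_of_le_pi hr_nonneg (by linarith)
  have hsa0 : 0 ≤ Real.sin a := Real.sin_nonneg_of_nonneg_of_le_pi ha_nonneg (by linarith [har])
  have hkey : Real.sin r ^2 ≤ Real.sin a ^2 + (r^2 - a^2) := by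
    nlinarith [mul_le_mul hd hsum (by linarith) (by linarith)]
  have ha2 : a^2 = x^2 := sq_abs x
  have hfin : Real.sin r ^2 ≤ ‖Complex.sin w‖^2 := by
    rw [hnormsq, hid, hsin_even]
    nlinarith
  calc Real.sin r = Real.sqrt (Real.sin r ^2) := (Real.sqrt_sq hsr0).symm
    _ ≤ Real.sqrt (‖Complex.sin w‖^2) := Real.sqrt_le_sqrt hfin
    _ = ‖Complex.sin w‖ := Real.sqrt_sq (norm_nonneg _)


lemma ball_in_sin_image : ∀ v : ℂ, ‖v‖ < 0.687 → ∃ w ∈ ball (0:ℂ) 1, Complex.sin w = v := by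
  have hA_open : IsOpen (Complex.sin '' (ball (0:ℂ) 1)) := by
    have han : AnalyticOnNhd ℂ Complex.sin (ball (0:ℂ) 1) :=
      Complex.differentiable_sin.differentiableOn.analyticOnNhd isOpen_ball
    rcases han.is_constant_or_isOpen (convex_ball (0:ℂ) 1).isPreconnected with ⟨w0, hw0⟩ | h
    · exfalso
      have h0 : Complex.sin 0 = w0 := hw0 0 (by simp)
      have h1 : Complex.sin (1/2 : ℂ) = w0 := hw0 (1/2) (by
        rw [mem_ball_zero_iff, show (1/2 : ℂ) = ((1/2 : ℝ) : ℂ) by norm_num,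
          Complex.norm_real]
        rw [Real.norm_eq_abs, _root_.abs_of_nonneg (by norm_num : (0:ℝ) ≤ 1/2)]; norm_num)
      rw [Complex.sin_zero] at h0
      rw [show (1/2 : ℂ) = ((1/2 : ℝ) : ℂ) by norm_num, ← Complex.ofReal_sin] at h1
      have h2 : Real.sin (1/2) > 0 :=
        Real.sin_pos_of_pos_of_lt_pi (by norm_num) (by linarith [Real.pi_gt_three])
      rw [← h0] at h1
      have := Complex.ofReal_eq_zero.1 h1
      linarith
    · exact h _ (subset_refl _) isOpen_ball
  have hS_closed : IsClosed (Complex.sin '' (closedBall (0:ℂ) 0.99)) :=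
    ((isCompact_closedBall (0:ℂ) 0.99).image Complex.continuous_sin).isClosed
  have hproper : ∀ v ∈ Complex.sin '' (ball (0:ℂ) 1), ‖v‖ < 0.687 →
      v ∈ Complex.sin '' (closedBall (0:ℂ) 0.99) := by
    rintro v ⟨w, hw, rfl⟩ hv
    rw [mem_ball, dist_zero_right] at hw
    refine ⟨w, ?_, rfl⟩
    rw [mem_closedBall, dist_zero_right]
    by_contra hcon
    push_neg at hcon
    have h1 : Real.sin ‖w‖ ≤ ‖Complex.sin w‖ := sin_lower w hw.le
    have h2 : ‖w‖ - ‖w‖^3/4 < Real.sin ‖w‖ := by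
      have := Real.sin_gt_sub_cube (x := ‖w‖) (by linarith)
      linarith [pow_nonneg (norm_nonneg w) 3]
    have h3 : (0.74 : ℝ) ≤ ‖w‖ - ‖w‖^3/4 := by
      nlinarith [mul_nonneg (sub_nonneg.2 hcon.le) (sub_nonneg.2 hw.le),
        mul_nonneg (mul_nonneg (sub_nonneg.2 hcon.le) (sub_nonneg.2 hw.le)) (norm_nonneg w)]
    linarith
  -- connectedness argument
  intro v hv
  have hsubset : ball (0:ℂ) 0.687 ⊆ Complex.sin '' (ball (0:ℂ) 1) ∩ ball (0:ℂ) 0.687 := by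
    apply IsPreconnected.subset_left_of_subset_union
      (hA_open.inter isOpen_ball) (hS_closed.isOpen_compl)
    · -- disjoint
      rw [Set.disjoint_iff]
      rintro x ⟨⟨hx1, hx2⟩, hx3⟩
      exact hx3 (hproper x hx1 (by rwa [mem_ball, dist_zero_right] at hx2))
    · -- union cover
      intro x hx
      by_cases hmem : x ∈ Complex.sin '' (closedBall (0:ℂ) 0.99)
      · left
        rcases hmem with ⟨w, hw, rfl⟩
        exact ⟨⟨w, closedBall_subset_ball (by norm_num) hw, rfl⟩, hx⟩
      · right; exact hmem
    · exact ⟨0, mem_ball_self (by norm_num), ⟨0, mem_ball_self (by norm_num), Complex.sin_zero⟩, mem_ball_self (by norm_num)⟩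
    · exact (convex_ball (0:ℂ) 0.687).isPreconnected
  have := hsubset (show v ∈ ball (0:ℂ) 0.687 by rwa [mem_ball, dist_zero_right])
  rcases this.1 with ⟨w, hw, hws⟩
  exact ⟨w, hw, hws⟩


theorem stmt5 (β₁ β₂ : ℝ) (hβ₁ : 0 < β₁) (hβ₂ : 0 < β₂)
    (hcond : 2 * (nu0 * (β₁ + β₂ * nu1)) ≥ Real.pi)
    (p : ℂ → ℂ) (hp : AnalyticOnNhd ℂ p (ball 0 1)) (hp0 : p 0 = 1)
    (hsub : ∀ z ∈ ball (0 : ℂ) 1,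
      ∃ w ∈ ball (0 : ℂ) 1, (1 + (β₁ : ℂ) * z * deriv p z + (β₂ : ℂ) * z ^ 2 * deriv (deriv p) z) = 1 + Complex.log (w + (1 + w ^ 2) ^ ((1 : ℂ) / 2))) :
    ∀ z ∈ ball (0 : ℂ) 1, ∃ w ∈ ball (0 : ℂ) 1, p z = 1 + Complex.sin w := by
  -- numeric facts
  have hpi3 : (3.141592 : ℝ) < Real.pi := Real.pi_gt_d6
  have hcos1_pos : 0 < Real.cos 1 :=
    Real.cos_pos_of_mem_Ioo ⟨by linarith, by linarith⟩
  have hsin_half : (15/32 : ℝ) < Real.sin (1/2) := by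
    have := Real.sin_gt_sub_cube (by norm_num : (0:ℝ) < 1/2)
    norm_num at this ⊢
    linarith
  have hcos1_ub : Real.cos 1 ≤ 0.560546875 := by
    have h1 : Real.cos 1 = 1 - 2 * Real.sin (1/2) ^ 2 := by
      have h2 : Real.cos (2 * (1/2)) = 1 - 2 * Real.sin (1/2)^2 := by
        rw [Real.cos_two_mul]
        have := Real.sin_sq_add_cos_sq (1/2 : ℝ)
        linarith
      norm_num at h2; exact h2
    have hs : Real.sin (1/2) ≤ 1 := Real.sin_le_one _
    nlinarith
  have hnu0 : nu0 = Real.cos 1 := by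
    rw [nu0, show (1 : ℝ) - Real.sin 1 ^2 = Real.cos 1 ^2 by
      have := Real.sin_sq_add_cos_sq (1:ℝ); linarith]
    exact Real.sqrt_sq hcos1_pos.le
  have hnu1 : nu1 ≤ 0 := by
    rw [nu1]
    apply div_nonpos_of_nonpos_of_nonneg
    · simp only [neg_nonpos]
      exact Real.sin_nonneg_of_nonneg_of_le_pi (by norm_num) (by linarith)
    · have h2 : Real.cos 1 ^ 2 = 1/2 + Real.cos 2 / 2 := by
        have := Real.cos_sq (1:ℝ); norm_num at this; exact this
      nlinarith [sq_nonneg (Real.cos 1)]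
  have hβ₁_lb : 2.80225 ≤ β₁ := by
    have h1 : 2 * (Real.cos 1 * β₁) ≥ Real.pi := by
      rw [hnu0] at hcond
      nlinarith [mul_nonpos_of_nonneg_of_nonpos (mul_nonneg hcos1_pos.le hβ₂.le) hnu1]
    nlinarith [mul_le_mul_of_nonneg_right hcos1_ub hβ₁.le]
  -- the function g and its bound
  set g : ℂ → ℂ := fun u => (β₁ : ℂ) * u * deriv p u + (β₂ : ℂ) * u^2 * deriv (deriv p) u with hg_def
  have hp' : AnalyticOnNhd ℂ (deriv p) (ball 0 1) := hp.deriv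
  have hp'' : AnalyticOnNhd ℂ (deriv (deriv p)) (ball 0 1) := hp'.deriv
  have hg_diff : DifferentiableOn ℂ g (ball 0 1) := by
    apply DifferentiableOn.add
    · exact (differentiableOn_const _ |>.mul differentiableOn_id).mul hp'.differentiableOn
    · exact (differentiableOn_const _ |>.mul (differentiableOn_id.pow 2)).mul hp''.differentiableOn
  have hg0 : g 0 = 0 := by simp [hg_def]
  have hgM : ∀ u ∈ ball (0:ℂ) 1, ‖g u‖ ≤ 1.923 := by
    intro u hu
    obtain ⟨w, hw, heq⟩ := hsub u hu
    have hgu : g u = Complex.log (w + (1 + w ^ 2) ^ ((1 : ℂ) / 2)) := by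
      have : 1 + g u = 1 + Complex.log (w + (1 + w ^ 2) ^ ((1 : ℂ) / 2)) := by
        rw [hg_def]; rw [← heq]; ring
      exact add_left_cancel this
    rw [hgu]
    exact asinh_bound w (mem_ball_zero_iff.1 hw)
  -- Schwarz
  have hg_schwarz : ∀ u ∈ ball (0:ℂ) 1, ‖g u‖ ≤ 1.9231 * ‖u‖ := by
    intro u hu
    have hmaps : MapsTo g (ball (0:ℂ) 1) (ball (g 0) 1.9231) := by
      intro x hx
      rw [hg0, mem_ball, dist_zero_right]
      exact lt_of_le_of_lt (hgM x hx) (by norm_num)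
    have := Complex.dist_le_div_mul_dist_of_mapsTo_ball hg_diff (hmaps.mono_right ball_subset_closedBall) hu
    rw [hg0, dist_zero_right, dist_zero_right, div_one] at this
    exact this
  -- key bound on z * p'(z)
  set q : ℝ := β₁ / β₂ with hq_def
  have hq : 0 < q := div_pos hβ₁ hβ₂
  have hβ₂q : β₂ * q = β₁ := by rw [hq_def]; field_simp
  have hmem : ∀ z ∈ ball (0:ℂ) 1, ∀ s ∈ Icc (0:ℝ) 1, (s:ℂ)*z ∈ ball (0:ℂ) 1 := by
    intro z hz s hs
    rw [mem_ball_zero_iff] at hz ⊢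
    rw [norm_mul, Complex.norm_real, Real.norm_eq_abs, _root_.abs_of_nonneg hs.1]
    calc s * ‖z‖ ≤ 1 * ‖z‖ := mul_le_mul_of_nonneg_right hs.2 (norm_nonneg z)
      _ = ‖z‖ := one_mul _
      _ < 1 := hz
  have hkey : ∀ z ∈ ball (0:ℂ) 1, ‖z * deriv p z‖ ≤ (1.9231/β₁) * ‖z‖ := by
    intro z hz
    set Φ : ℝ → ℂ := fun s => (s ^ q : ℝ) • (z * deriv p ((s:ℂ)*z)) with hΦ_def
    set F : ℝ → ℂ := fun s => ((β₂⁻¹ * s ^ (q-2) : ℝ)) • g ((s:ℂ)*z) with hF_def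
    have hcont_sz : Continuous (fun s : ℝ => (s:ℂ)*z) := by continuity
    have hΦcont : ContinuousOn Φ (Icc 0 1) := by
      apply ContinuousOn.fun_smul
      · intro s hs
        exact (Real.continuousAt_rpow_const s q (Or.inr hq.le)).continuousWithinAt
      · apply ContinuousOn.mul continuousOn_const
        exact (hp'.continuousOn).comp hcont_sz.continuousOn (fun s hs => hmem z hz s hs)
    have hderiv : ∀ s ∈ Ioo (0:ℝ) 1, HasDerivAt Φ (F s) s := by
      intro s hs
      have hs0 : (0:ℝ) < s := hs.1
      have hszball : (s:ℂ)*z ∈ ball (0:ℂ) 1 := hmem z hz s ⟨hs0.le, hs.2.le⟩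
      have hA : HasDerivAt (fun s:ℝ => s ^ q) (q * s^(q-1)) s :=
        Real.hasDerivAt_rpow_const (Or.inl hs0.ne')
      have hB1 : HasDerivAt (deriv p) (deriv (deriv p) ((s:ℂ)*z)) ((s:ℂ)*z) :=
        ((hp' _ hszball).differentiableAt).hasDerivAt
      have hB2 : HasDerivAt (fun u:ℂ => u*z) z (s:ℂ) := hasDerivAt_mul_const z
      have hB3 : HasDerivAt (fun u:ℂ => deriv p (u*z)) (deriv (deriv p) ((s:ℂ)*z) * z) (s:ℂ) :=
        HasDerivAt.comp (h := fun u:ℂ => u*z) (s:ℂ) hB1 hB2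
      have hB4 : HasDerivAt (fun s:ℝ => deriv p ((s:ℂ)*z)) (deriv (deriv p) ((s:ℂ)*z) * z) s :=
        hB3.comp_ofReal
      have hB : HasDerivAt (fun s:ℝ => z * deriv p ((s:ℂ)*z))
          (z * (deriv (deriv p) ((s:ℂ)*z) * z)) s := hB4.const_mul z
      have hAB := hA.smul hB
      refine hAB.congr_deriv ?_
      -- show F s = q*s^(q-1) • (z * p'(sz)) + s^q • (z*(p''(sz)*z))
      symm
      show F s = _
      simp only [hF_def, hg_def]
      have hs1 : s^(q-1) = s^(q-2) * s := by
        rw [← Real.rpow_add_one hs0.ne' (q-2)]; ring_nf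
      have hs2 : s^q = s^(q-2) * s^(2:ℕ) := by
        rw [← Real.rpow_natCast s 2, ← Real.rpow_add hs0 (q-2)]; norm_num
      simp only [Complex.real_smul]
      push_cast [hs1, hs2]
      have hβ₂0 : (β₂:ℂ) ≠ 0 := Complex.ofReal_ne_zero.2 hβ₂.ne'
      have hqc : (q:ℂ) = (β₁:ℂ)/(β₂:ℂ) := by rw [hq_def]; push_cast; ring
      rw [hqc]
      field_simp
      ring
    have hG_int : IntervalIntegrable (fun s:ℝ => 1.9231*‖z‖/β₂ * s^(q-1)) MeasureTheory.volume 0 1 := by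
      apply IntervalIntegrable.const_mul
      exact intervalIntegral.intervalIntegrable_rpow' (by linarith)
    have hΙ : Ι (0:ℝ) 1 = Ioc (0:ℝ) 1 := uIoc_of_le zero_le_one
    have hFle : ∀ s ∈ Ι (0:ℝ) 1, ‖F s‖ ≤ 1.9231*‖z‖/β₂ * s^(q-1) := by
      rw [hΙ]
      intro s hs
      have hs0 : (0:ℝ) < s := hs.1
      have hszball : (s:ℂ)*z ∈ ball (0:ℂ) 1 := hmem z hz s ⟨hs0.le, hs.2⟩
      have h1 : ‖g ((s:ℂ)*z)‖ ≤ 1.9231 * (s * ‖z‖) := by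
        have := hg_schwarz _ hszball
        rwa [norm_mul, Complex.norm_real, Real.norm_eq_abs, _root_.abs_of_nonneg hs0.le] at this
      have h2 : ‖F s‖ = β₂⁻¹ * s^(q-2) * ‖g ((s:ℂ)*z)‖ := by
        simp only [hF_def]
        rw [norm_smul, Real.norm_eq_abs, _root_.abs_of_nonneg (by positivity)]
      rw [h2]
      have hs1 : s^(q-1) = s^(q-2) * s := by
        rw [← Real.rpow_add_one hs0.ne' (q-2)]; ring_nf
      rw [hs1]
      have hrp : (0:ℝ) ≤ s^(q-2) := Real.rpow_nonneg hs0.le _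
      calc β₂⁻¹ * s^(q-2) * ‖g ((s:ℂ)*z)‖ ≤ β₂⁻¹ * s^(q-2) * (1.9231 * (s * ‖z‖)) := by
            apply mul_le_mul_of_nonneg_left h1 (by positivity)
        _ = 1.9231*‖z‖/β₂ * (s^(q-2) * s) := by field_simp
    have hF_meas : MeasureTheory.AEStronglyMeasurable F (MeasureTheory.volume.restrict (Ι (0:ℝ) 1)) := by
      rw [hΙ]
      apply ContinuousOn.aestronglyMeasurable _ measurableSet_Ioc
      apply ContinuousOn.fun_smul
      · apply ContinuousOn.mul continuousOn_const
        intro s hs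
        exact (Real.continuousAt_rpow_const s (q-2) (Or.inl (ne_of_gt hs.1))).continuousWithinAt
      · exact (hg_diff.continuousOn).comp hcont_sz.continuousOn
          (fun s hs => hmem z hz s ⟨hs.1.le, hs.2⟩)
    have hF_int : IntervalIntegrable F MeasureTheory.volume 0 1 := by
      apply IntervalIntegrable.mono_fun hG_int hF_meas
      filter_upwards [MeasureTheory.ae_restrict_mem measurableSet_uIoc] with s hs
      exact (hFle s hs).trans (le_abs_self _)
    have hFTC : ∫ s in (0:ℝ)..1, F s = Φ 1 - Φ 0 :=
      intervalIntegral.integral_eq_sub_of_hasDerivAt_of_le zero_le_one hΦcont hderiv hF_int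
    have hΦ1 : Φ 1 = z * deriv p z := by
      rw [hΦ_def]; simp [Real.one_rpow]
    have hΦ0 : Φ 0 = 0 := by
      rw [hΦ_def]; simp [Real.zero_rpow hq.ne']
    have hbound : ‖∫ s in (0:ℝ)..1, F s‖ ≤ 1.9231*‖z‖/β₂ * (1/q) := by
      have h1 : ‖∫ s in (0:ℝ)..1, F s‖ ≤ |∫ s in (0:ℝ)..1, 1.9231*‖z‖/β₂ * s^(q-1)| := by
        refine (intervalIntegral.norm_integral_le_of_norm_le zero_le_one ?_ hG_int).trans (le_abs_self _)
        exact Filter.Eventually.of_forall (fun s hs => hFle s (by rw [hΙ]; exact hs))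
      have h2 : ∫ s in (0:ℝ)..1, 1.9231*‖z‖/β₂ * s^(q-1) = 1.9231*‖z‖/β₂ * (1/q) := by
        rw [intervalIntegral.integral_const_mul, integral_rpow (Or.inl (by linarith))]
        simp [show q - 1 + 1 = q by ring, Real.zero_rpow hq.ne']
      rw [h2] at h1
      calc ‖∫ s in (0:ℝ)..1, F s‖ ≤ |1.9231*‖z‖/β₂ * (1/q)| := h1
        _ = 1.9231*‖z‖/β₂ * (1/q) := _root_.abs_of_nonneg (by positivity)
    rw [hFTC, hΦ1, hΦ0, sub_zero] at hbound
    calc ‖z * deriv p z‖ ≤ 1.9231*‖z‖/β₂ * (1/q) := hbound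
      _ = 1.9231/β₁ * ‖z‖ := by
        rw [hq_def]; field_simp
  -- integrate p' to bound p z - 1
  have hp_bound : ∀ z ∈ ball (0:ℂ) 1, ‖p z - 1‖ ≤ (1.9231/β₁) * ‖z‖ := by
    intro z hz
    have hψ : ∀ s ∈ uIcc (0:ℝ) 1, HasDerivAt (fun s:ℝ => p ((s:ℂ)*z))
        (z * deriv p ((s:ℂ)*z)) s := by
      intro s hs
      rw [uIcc_of_le zero_le_one] at hs
      have hszball : (s:ℂ)*z ∈ ball (0:ℂ) 1 := hmem z hz s hs
      have hB1 : HasDerivAt p (deriv p ((s:ℂ)*z)) ((s:ℂ)*z) :=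
        ((hp _ hszball).differentiableAt).hasDerivAt
      have hB2 : HasDerivAt (fun u:ℂ => u*z) z (s:ℂ) := hasDerivAt_mul_const z
      have hB3 : HasDerivAt (fun u:ℂ => p (u*z)) (deriv p ((s:ℂ)*z) * z) (s:ℂ) :=
        HasDerivAt.comp (h := fun u:ℂ => u*z) (s:ℂ) hB1 hB2
      have := hB3.comp_ofReal
      convert this using 1
      ring
    have hcont_sz : Continuous (fun s : ℝ => (s:ℂ)*z) := by continuity
    have hint : IntervalIntegrable (fun s:ℝ => z * deriv p ((s:ℂ)*z)) MeasureTheory.volume 0 1 := by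
      apply ContinuousOn.intervalIntegrable
      rw [uIcc_of_le zero_le_one]
      apply ContinuousOn.mul continuousOn_const
      exact (hp'.continuousOn).comp hcont_sz.continuousOn (fun s hs => hmem z hz s hs)
    have hFTC2 := intervalIntegral.integral_eq_sub_of_hasDerivAt hψ hint
    simp only [Complex.ofReal_one, Complex.ofReal_zero, one_mul, zero_mul, hp0] at hFTC2
    have hle : ∀ s ∈ Ι (0:ℝ) 1, ‖z * deriv p ((s:ℂ)*z)‖ ≤ (1.9231/β₁) * ‖z‖ := by
      rw [uIoc_of_le zero_le_one]
      intro s hs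
      have hs0 : (0:ℝ) < s := hs.1
      have hszball : (s:ℂ)*z ∈ ball (0:ℂ) 1 := hmem z hz s ⟨hs0.le, hs.2⟩
      have h1 := hkey _ hszball
      have he : ‖((s:ℂ)*z)‖ = s * ‖z‖ := by
        rw [norm_mul, Complex.norm_real, Real.norm_eq_abs, _root_.abs_of_nonneg hs0.le]
      rw [he] at h1
      have h2 : ‖((s:ℂ)*z) * deriv p ((s:ℂ)*z)‖ = s * ‖z * deriv p ((s:ℂ)*z)‖ := by
        rw [show ((s:ℂ)*z) * deriv p ((s:ℂ)*z) = (s:ℂ) * (z * deriv p ((s:ℂ)*z)) by ring,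
          norm_mul, Complex.norm_real, Real.norm_eq_abs, _root_.abs_of_nonneg hs0.le]
      rw [h2] at h1
      have h3 : ‖z * deriv p ((s:ℂ)*z)‖ ≤ 1.9231/β₁ * ‖z‖ := by
        have hβ₁' : (0:ℝ) < 1.9231/β₁ * ‖z‖ + 1 := by positivity
        nlinarith [norm_nonneg (z * deriv p ((s:ℂ)*z))]
      exact h3
    have := intervalIntegral.norm_integral_le_of_norm_le_const hle
    rw [hFTC2] at this
    simpa using this
  -- finish
  intro z hz
  have h1 : ‖p z - 1‖ < 0.687 := by
    have h2 := hp_bound z hz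
    have h3 : (1.9231/β₁) ≤ 0.6863 := by
      rw [div_le_iff₀ hβ₁]
      nlinarith
    have h4 : ‖z‖ < 1 := mem_ball_zero_iff.1 hz
    have h5 : (1.9231/β₁) * ‖z‖ ≤ 0.6863 * 1 := by
      apply mul_le_mul h3 h4.le (norm_nonneg z) (by norm_num)
    calc ‖p z - 1‖ ≤ (1.9231/β₁) * ‖z‖ := h2
      _ ≤ 0.6863 * 1 := h5
      _ < 0.687 := by norm_num
  obtain ⟨w, hw, hsw⟩ := ball_in_sin_image (p z - 1) h1
  exact ⟨w, hw, by rw [hsw]; ring⟩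

end SinSubordinationHelpers
end

section
/- Let β₁, β₂ > 0 be real numbers satisfying ν₀(β₁ + β₂ν₁) ≥ e − 1, where ν₀ = √(1 − sin²1) and ν₁ = −sin 2/(1 + cos 2). Let p be analytic on the open unit disk 𝔻 with p(0) = 1, and suppose that for every z ∈ 𝔻 the value 1 + β₁·z·p′(z) + β₂·z²·p″(z) lies in the set {w ∈ ℂ : w ≠ 0, |log w| < 1} (principal branch of the complex logarithm). Then for every z ∈ 𝔻, p(z) ∈ {1 + sin w : w ∈ 𝔻}, i.e. p(z) ≺ 1 + sin z. -/
open Metric Set Filter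


lemma cos_one_le' : Real.cos 1 ≤ 53/96 := by
  have h := Real.cos_bound (x := 1) (by norm_num)
  rw [abs_le] at h
  norm_num at h ⊢
  linarith [h.1, h.2]

lemma sin_one_ge' : 75/96 ≤ Real.sin 1 := by
  have h := Real.sin_bound (x := 1) (by norm_num)
  rw [abs_le] at h
  norm_num at h ⊢
  linarith [h.1, h.2]

lemma key_ineq : Real.cos 1 < Real.sin 1 * (Real.sqrt 2 / 2) := by
  have h2 : (106/75 : ℝ) < Real.sqrt 2 := by
    rw [show (106/75:ℝ) = Real.sqrt ((106/75)^2) by rw [Real.sqrt_sq (by norm_num)]]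
    apply Real.sqrt_lt_sqrt (by positivity)
    norm_num
  nlinarith [cos_one_le', sin_one_ge', Real.sin_pos_of_pos_of_lt_pi (x := 1) one_pos
    (by linarith [Real.pi_gt_three]), Real.sqrt_nonneg 2]

lemma norm_exp_sub_one_le' (ζ : ℂ) : ‖Complex.exp ζ - 1‖ ≤ Real.exp ‖ζ‖ - 1 := by
  have hf' : ∀ r : ℝ, HasDerivAt (fun r : ℝ => Complex.exp ((r:ℂ)*ζ) - 1)
      (Complex.exp ((r:ℂ)*ζ) * ζ) r := by
    intro r
    have hq : HasDerivAt (fun r : ℝ => (r:ℂ)*ζ) ζ r := by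
      simpa using ((hasDerivAt_id ((r:ℂ))).mul_const ζ).comp_ofReal
    simpa using (hq.cexp).sub_const 1
  have hB : ∀ r : ℝ, HasDerivAt (fun r : ℝ => Real.exp (r * ‖ζ‖) - 1)
      (Real.exp (r * ‖ζ‖) * ‖ζ‖) r := by
    intro r
    simpa using (((hasDerivAt_id r).mul_const ‖ζ‖).exp).sub_const 1
  have key := image_norm_le_of_norm_deriv_right_le_deriv_boundary
    (f := fun r : ℝ => Complex.exp ((r:ℂ)*ζ) - 1) (a := 0) (b := 1)
    (f' := fun r : ℝ => Complex.exp ((r:ℂ)*ζ) * ζ)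
    (fun r _ => (hf' r).continuousAt.continuousWithinAt)
    (fun r _ => (hf' r).hasDerivWithinAt)
    (B := fun r => Real.exp (r * ‖ζ‖) - 1) (B' := fun r => Real.exp (r * ‖ζ‖) * ‖ζ‖)
    (by simp) (fun r => hB r)
    (by
      intro x hx
      rw [norm_mul, Complex.norm_exp]
      have hre : ((x:ℂ)*ζ).re ≤ x * ‖ζ‖ := by
        have : ((x:ℂ)*ζ).re = x * ζ.re := by simp
        rw [this]
        apply mul_le_mul_of_nonneg_left _ hx.1
        simpa using Complex.re_le_norm ζ
      have := Real.exp_le_exp.2 hre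
      exact mul_le_mul_of_nonneg_right this (norm_nonneg ζ))
  have := key (x := 1) (by norm_num)
  simpa using this



lemma exists_sin_eq_s6 (u : ℂ) (hu : ‖u‖ ≤ Real.cos 1) : ∃ w : ℂ, ‖w‖ < 1 ∧ Complex.sin w = u := by
  have hcos1 : (0:ℝ) < Real.cos 1 := Real.cos_pos_of_mem_Ioo
    (by constructor <;> nlinarith [Real.pi_gt_three])
  have hsin1 : (0:ℝ) < Real.sin 1 := Real.sin_pos_of_pos_of_lt_pi one_pos
    (by linarith [Real.pi_gt_three])
  have hcos1' : Real.cos 1 < 1 := by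
    nlinarith [key_ineq, Real.sq_sqrt (by norm_num : (0:ℝ) ≤ 2), Real.sqrt_nonneg 2,
      Real.sin_le_one 1]
  set S : ℂ → ℂ := fun q => Complex.exp (Complex.log (1 - q^2) / 2) with hSdef
  -- basic facts for ‖q‖ ≤ cos 1
  have hre : ∀ q : ℂ, ‖q‖ ≤ Real.cos 1 → Real.sin 1 ^ 2 ≤ (1 - q^2).re := by
    intro q hq
    have h1 : (q^2).re ≤ ‖q‖^2 := by
      have h := Complex.re_le_norm (q^2)
      rw [norm_pow] at h
      exact h
    have h2 : ‖q‖^2 ≤ Real.cos 1 ^ 2 := by nlinarith [norm_nonneg q]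
    have : (1 - q^2).re = 1 - (q^2).re := by simp
    rw [this, Real.sin_sq]
    linarith
  have hslit : ∀ q : ℂ, ‖q‖ ≤ Real.cos 1 → (1 - q^2) ∈ Complex.slitPlane := by
    intro q hq
    exact Or.inl (by nlinarith [hre q hq])
  have hS2 : ∀ q : ℂ, ‖q‖ ≤ Real.cos 1 → S q ^ 2 = 1 - q^2 := by
    intro q hq
    rw [hSdef]
    rw [sq, ← Complex.exp_add, add_halves,
      Complex.exp_log (Complex.slitPlane_ne_zero (hslit q hq))]
  have hSnorm2 : ∀ q : ℂ, ‖q‖ ≤ Real.cos 1 → ‖S q‖^2 = ‖1 - q^2‖ := by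
    intro q hq
    rw [← norm_pow, hS2 q hq]
  have hSge : ∀ q : ℂ, ‖q‖ ≤ Real.cos 1 → Real.sqrt (1 - ‖q‖^2) ≤ ‖S q‖ := by
    intro q hq
    have h1 : 1 - ‖q‖^2 ≤ ‖S q‖^2 := by
      rw [hSnorm2 q hq]
      calc 1 - ‖q‖^2 ≤ (1 - q^2).re := by
            have : (1 - q^2).re = 1 - (q^2).re := by simp
            rw [this]
            have := Complex.re_le_norm (q^2)
            simp only [norm_pow] at this
            linarith
        _ ≤ ‖1 - q^2‖ := by
            have h := Complex.re_le_norm (1 - q^2)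
            exact h
    calc Real.sqrt (1 - ‖q‖^2) ≤ Real.sqrt (‖S q‖^2) := Real.sqrt_le_sqrt h1
      _ = ‖S q‖ := Real.sqrt_sq (norm_nonneg _)
  have hSpos : ∀ q : ℂ, S q ≠ 0 := fun q => Complex.exp_ne_zero _
  have hsqrt_pos : ∀ q : ℂ, ‖q‖ ≤ Real.cos 1 → 0 < Real.sqrt (1 - ‖q‖^2) := by
    intro q hq
    apply Real.sqrt_pos.2
    nlinarith [norm_nonneg q]
  have hSre : ∀ q : ℂ, ‖q‖ ≤ Real.cos 1 → Real.sin 1 * (Real.sqrt 2 / 2) ≤ (S q).re := by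
    intro q hq
    have harg : |(Complex.log (1 - q^2)).im| < Real.pi / 2 := by
      rw [Complex.log_im]
      exact Complex.abs_arg_lt_pi_div_two_iff.2 (Or.inl (by nlinarith [hre q hq]))
    have hre' : (S q).re = ‖S q‖ * Real.cos ((Complex.log (1 - q^2)).im / 2) := by
      rw [hSdef]
      simp only [Complex.exp_re, Complex.norm_exp]
      congr 1 <;> simp [Complex.div_re]
    rw [hre']
    have hcosge : Real.sqrt 2 / 2 ≤ Real.cos ((Complex.log (1 - q^2)).im / 2) := by
      rw [← Real.cos_pi_div_four, ← Real.cos_abs ((Complex.log (1 - q^2)).im / 2)]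
      apply Real.cos_le_cos_of_nonneg_of_le_pi (abs_nonneg _)
        (by linarith [Real.pi_pos])
      rw [abs_div, abs_of_pos (by norm_num : (0:ℝ) < 2)]
      linarith [harg]
    have hSn : Real.sin 1 ≤ ‖S q‖ := by
      have := hSge q hq
      have h1 : Real.sin 1 ≤ Real.sqrt (1 - ‖q‖^2) := by
        rw [show Real.sin 1 = Real.sqrt (Real.sin 1 ^2) from (Real.sqrt_sq hsin1.le).symm]
        apply Real.sqrt_le_sqrt
        rw [Real.sin_sq]
        nlinarith [norm_nonneg q]
      linarith
    calc Real.sin 1 * (Real.sqrt 2 / 2) ≤ ‖S q‖ * (Real.sqrt 2 / 2) := by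
          apply mul_le_mul_of_nonneg_right hSn (by positivity)
      _ ≤ ‖S q‖ * Real.cos ((Complex.log (1 - q^2)).im / 2) := by
          apply mul_le_mul_of_nonneg_left hcosge (norm_nonneg _)
  have hvre : ∀ q : ℂ, ‖q‖ ≤ Real.cos 1 → 0 < (Complex.I * q + S q).re := by
    intro q hq
    have h1 : (Complex.I * q + S q).re = (S q).re - q.im := by simp; ring
    rw [h1]
    have h2 : |q.im| ≤ ‖q‖ := by
      simpa using Complex.abs_im_le_norm q
    have := hSre q hq
    have := key_ineq
    have : q.im ≤ Real.cos 1 := le_trans (le_abs_self _) (le_trans h2 hq)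
    linarith [hSre q hq, key_ineq]
  have hvslit : ∀ q : ℂ, ‖q‖ ≤ Real.cos 1 → (Complex.I * q + S q) ∈ Complex.slitPlane :=
    fun q hq => Or.inl (hvre q hq)
  have hvinv : ∀ q : ℂ, ‖q‖ ≤ Real.cos 1 → (Complex.I * q + S q) * (S q - Complex.I * q) = 1 := by
    intro q hq
    linear_combination hS2 q hq + (-q^2) * Complex.I_sq
  have hvne : ∀ q : ℂ, ‖q‖ ≤ Real.cos 1 → (Complex.I * q + S q) ≠ 0 := by
    intro q hq h0
    have := hvinv q hq
    rw [h0, zero_mul] at this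
    exact zero_ne_one this
  -- the ray function
  set φ : ℝ → ℂ := fun r => Complex.log (Complex.I * ((r:ℂ)*u) + S ((r:ℂ)*u)) with hφdef
  have hqmem : ∀ r ∈ Icc (0:ℝ) 1, ‖(r:ℂ)*u‖ ≤ Real.cos 1 := by
    intro r hr
    rw [norm_mul, Complex.norm_real, Real.norm_eq_abs, abs_of_nonneg hr.1]
    calc r * ‖u‖ ≤ 1 * ‖u‖ := mul_le_mul_of_nonneg_right hr.2 (norm_nonneg u)
      _ = ‖u‖ := one_mul _
      _ ≤ _ := hu
  have hqnorm : ∀ r ∈ Icc (0:ℝ) 1, ‖(r:ℂ)*u‖ = r * ‖u‖ := by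
    intro r hr
    rw [norm_mul, Complex.norm_real, Real.norm_eq_abs, abs_of_nonneg hr.1]
  have hφ : ∀ r ∈ Icc (0:ℝ) 1, HasDerivAt φ (u * Complex.I / S ((r:ℂ)*u)) r := by
    intro r hr
    have hq := hqmem r hr
    set q : ℂ := (r:ℂ)*u with hqdef
    have hqr : HasDerivAt (fun r:ℝ => (r:ℂ)*u) u r := by
      simpa using ((hasDerivAt_id ((r:ℂ))).mul_const u).comp_ofReal
    have hA : HasDerivAt (fun r:ℝ => 1 - ((r:ℂ)*u)^2) (-(2*q*u)) r := by
      have h := (hqr.mul hqr).const_sub 1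
      have heq : (fun r:ℝ => 1 - ((r:ℂ)*u)^2) = (fun r:ℝ => 1 - ((r:ℂ)*u)*((r:ℂ)*u)) := by
        funext x; ring
      rw [heq]
      rw [show -(2*q*u) = -(u * ((r:ℂ) * u) + (r:ℂ) * u * u) by rw [hqdef]; ring]
      exact h
    have hlog1 : HasDerivAt (fun r:ℝ => Complex.log (1 - ((r:ℂ)*u)^2))
        ((-(2*q*u)) / (1 - q^2)) r := hA.clog_real (hslit q hq)
    have hS : HasDerivAt (fun r:ℝ => S ((r:ℂ)*u))
        (S q * ((-(2*q*u)) / (1 - q^2) / 2)) r := by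
      have := (hlog1.div_const 2).cexp
      simpa [hSdef] using this
    have hv : HasDerivAt (fun r:ℝ => Complex.I * ((r:ℂ)*u) + S ((r:ℂ)*u))
        (Complex.I * u + S q * ((-(2*q*u)) / (1 - q^2) / 2)) r := by
      exact (hqr.const_mul Complex.I).add hS
    have hφ' : HasDerivAt φ
        ((Complex.I * u + S q * ((-(2*q*u)) / (1 - q^2) / 2)) / (Complex.I * q + S q)) r := by
      exact hv.clog_real (hvslit q hq)
    convert hφ' using 1
    have h1 : (1:ℂ) - q^2 ≠ 0 := Complex.slitPlane_ne_zero (hslit q hq)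
    have h2 : S q ≠ 0 := hSpos q
    have h3 : Complex.I * q + S q ≠ 0 := hvne q hq
    rw [div_eq_div_iff h2 h3, ← hS2 q hq]
    field_simp
    linear_combination (u^2*(r:ℂ)) * Complex.I_sq
  -- boundary estimate
  have hB' : ∀ r ∈ Icc (0:ℝ) 1, HasDerivAt (fun r => Real.arcsin (r * ‖u‖))
      (1 / Real.sqrt (1 - (r * ‖u‖)^2) * ‖u‖) r := by
    intro r hr
    have h1 : r * ‖u‖ ≠ -1 := by nlinarith [hr.1, norm_nonneg u, hqnorm r hr, hqmem r hr]
    have h2 : r * ‖u‖ ≠ 1 := by nlinarith [hr.1, norm_nonneg u, hqnorm r hr, hqmem r hr, hcos1']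
    have hlin : HasDerivAt (fun r:ℝ => r * ‖u‖) ‖u‖ r := by
      simpa using (hasDerivAt_id r).mul_const ‖u‖
    have := (Real.hasDerivAt_arcsin h1 h2).comp r hlin
    exact this
  have key := image_norm_le_of_norm_deriv_right_le_deriv_boundary'
    (f := φ) (a := 0) (b := 1) (f' := fun r => u * Complex.I / S ((r:ℂ)*u))
    (fun r hr => (hφ r hr).continuousAt.continuousWithinAt)
    (fun r hr => (hφ r (Ico_subset_Icc_self hr)).hasDerivWithinAt)
    (B := fun r => Real.arcsin (r * ‖u‖))
    (B' := fun r => 1 / Real.sqrt (1 - (r * ‖u‖)^2) * ‖u‖)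
    (by
      rw [hφdef]
      simp [hSdef, Complex.log_one])
    ((Real.continuous_arcsin.comp (continuous_id.mul continuous_const)).continuousOn)
    (fun r hr => (hB' r (Ico_subset_Icc_self hr)).hasDerivWithinAt)
    (by
      intro r hr
      have hr' := Ico_subset_Icc_self hr
      have hq := hqmem r hr'
      rw [norm_div, norm_mul, Complex.norm_I, mul_one]
      have h1 := hSge _ hq
      have h2 := hsqrt_pos _ hq
      have e1 : r * ‖u‖ = ‖(r:ℂ)*u‖ := (hqnorm r hr').symm
      simp only [e1]
      have step : ‖u‖ / ‖S ((r:ℂ)*u)‖ ≤ ‖u‖ / Real.sqrt (1 - ‖(r:ℂ)*u‖^2) := by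
        gcongr
      have step2 : ‖u‖ / Real.sqrt (1 - ‖(r:ℂ)*u‖^2)
          = 1 / Real.sqrt (1 - ‖(r:ℂ)*u‖^2) * ‖u‖ := by ring
      rw [← step2]
      exact step)
  have hφ1 := key (x := 1) (by norm_num)
  refine ⟨-Complex.I * φ 1, ?_, ?_⟩
  · rw [norm_mul, norm_neg, Complex.norm_I, one_mul]
    have harcle : Real.arcsin (1 * ‖u‖) ≤ Real.arcsin (Real.cos 1) := by
      rw [one_mul]
      exact Real.monotone_arcsin hu
    have harccos : Real.arcsin (Real.cos 1) = Real.pi/2 - 1 := by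
      rw [← Real.sin_pi_div_two_sub, Real.arcsin_sin (by linarith [Real.pi_gt_three])
        (by linarith [Real.pi_pos])]
    calc ‖φ 1‖ ≤ Real.arcsin (1 * ‖u‖) := hφ1
      _ ≤ Real.pi/2 - 1 := by rw [← harccos]; exact harcle
      _ < 1 := by linarith [Real.pi_lt_d2]
  · -- sin (-I * φ 1) = u
    have hq1 : ‖((1:ℝ):ℂ)*u‖ ≤ Real.cos 1 := hqmem 1 (by norm_num)
    set q : ℂ := ((1:ℝ):ℂ)*u with hq1def
    have hqu : q = u := by rw [hq1def]; push_cast; ring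
    set v : ℂ := Complex.I * q + S q with hvdef
    have hvne' : v ≠ 0 := hvne q hq1
    have hexp : Complex.exp (φ 1) = v := by
      rw [hφdef]
      exact Complex.exp_log hvne'
    have hWI : -Complex.I * φ 1 * Complex.I = φ 1 := by
      linear_combination (-(φ 1)) * Complex.I_sq
    have hinv : v⁻¹ = S q - Complex.I * q := by
      exact inv_eq_of_mul_eq_one_right (hvinv q hq1)
    show (Complex.exp (-(-Complex.I * φ 1) * Complex.I)
        - Complex.exp ((-Complex.I * φ 1) * Complex.I)) * Complex.I / 2 = u
    rw [neg_mul, hWI, Complex.exp_neg, hexp, hinv]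
    rw [← hqu]
    linear_combination (-q) * Complex.I_sq


lemma deriv_bound (β₁ β₂ : ℝ) (hβ₁ : 0 < β₁) (hβ₂ : 0 < β₂)
    (p : ℂ → ℂ) (hp : AnalyticOnNhd ℂ p (ball 0 1))
    (hΦ : ∀ w ∈ ball (0:ℂ) 1,
      ‖(β₁:ℂ)*w*deriv p w + (β₂:ℂ)*w^2*deriv (deriv p) w‖ ≤ (Real.exp 1 - 1)*‖w‖) :
    ∀ z ∈ ball (0:ℂ) 1, ‖deriv p z‖ ≤ (Real.exp 1 - 1)/β₁ := by
  have hE : (0:ℝ) < Real.exp 1 - 1 := by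
    nlinarith [Real.exp_one_gt_d9]
  have hd1 : AnalyticOnNhd ℂ (deriv p) (ball 0 1) := hp.deriv
  have hd2 : AnalyticOnNhd ℂ (deriv (deriv p)) (ball 0 1) := hd1.deriv
  set α : ℝ := β₁/β₂ with hαdef
  have hα : 0 < α := div_pos hβ₁ hβ₂
  have hmem : ∀ z ∈ ball (0:ℂ) 1, ∀ t:ℝ, 0 ≤ t → t ≤ 1 → (t:ℂ)*z ∈ ball (0:ℂ) 1 := by
    intro z hz t ht0 ht1
    rw [mem_ball_zero_iff] at hz ⊢
    rw [norm_mul, Complex.norm_real, Real.norm_eq_abs, abs_of_nonneg ht0]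
    calc t * ‖z‖ ≤ 1 * ‖z‖ := mul_le_mul_of_nonneg_right ht1 (norm_nonneg z)
      _ = ‖z‖ := one_mul _
      _ < 1 := hz
  have main : ∀ z ∈ ball (0:ℂ) 1, z ≠ 0 → ‖deriv p z‖ ≤ (Real.exp 1 - 1)/β₁ := by
    intro z hz hz0
    set u₁ : ℝ → ℂ := fun t => ((t ^ α : ℝ) : ℂ) * deriv p ((t:ℂ)*z) with hu₁def
    set D : ℝ → ℂ := fun t => ((α * t^(α-1) :ℝ):ℂ) * deriv p ((t:ℂ)*z)
      + ((t^α :ℝ):ℂ) * (deriv (deriv p) ((t:ℂ)*z) * z) with hDdef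
    have hu₁ : ∀ t:ℝ, 0 < t → t ≤ 1 → HasDerivAt u₁ (D t) t := by
      intro t ht0 ht1
      have htz : (t:ℂ)*z ∈ ball (0:ℂ) 1 := hmem z hz t ht0.le ht1
      have h_rpow : HasDerivAt (fun t:ℝ => ((t ^ α : ℝ) : ℂ)) ((α * t^(α-1) :ℝ):ℂ) t :=
        (Real.hasDerivAt_rpow_const (Or.inl (ne_of_gt ht0))).ofReal_comp
      have hdp : HasDerivAt (fun t:ℝ => deriv p ((t:ℂ)*z))
          (deriv (deriv p) ((t:ℂ)*z) * z) t := by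
        have hF : HasDerivAt (fun ζ:ℂ => deriv p (ζ*z))
            (deriv (deriv p) ((t:ℂ)*z) * z) (t:ℂ) := by
          have hin : HasDerivAt (fun ζ:ℂ => ζ*z) z (t:ℂ) := by
            simpa using (hasDerivAt_id ((t:ℂ))).mul_const z
          exact ((hd1 _ htz).differentiableAt.hasDerivAt).comp (t:ℂ) hin
        exact hF.comp_ofReal
      exact h_rpow.mul hdp
    have hDbound : ∀ t:ℝ, 0 < t → t ≤ 1 → ‖D t‖ ≤ (Real.exp 1 - 1)/β₂ * t^(α-1) := by
      intro t ht0 ht1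
      have htz : (t:ℂ)*z ∈ ball (0:ℂ) 1 := hmem z hz t ht0.le ht1
      have e1 : α * t^(α-1) = t^(α-2) * β₂⁻¹ * β₁ * t := by
        have : t^(α-1) = t^(α-2) * t := by
          rw [← Real.rpow_add_one (ne_of_gt ht0)]
          ring_nf
        rw [this, hαdef]
        field_simp
      have e2 : (t:ℝ)^α = t^(α-2) * β₂⁻¹ * β₂ * (t*t) := by
        have : (t:ℝ)^α = t^(α-2) * t * t := by
          rw [← Real.rpow_add_one (ne_of_gt ht0), ← Real.rpow_add_one (ne_of_gt ht0)]
          ring_nf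
        rw [this]
        field_simp
      have hid : z * D t = ((t^(α-2) :ℝ):ℂ) * (β₂:ℂ)⁻¹ *
          ((β₁:ℂ)*((t:ℂ)*z)*deriv p ((t:ℂ)*z) + (β₂:ℂ)*((t:ℂ)*z)^2*deriv (deriv p) ((t:ℂ)*z)) := by
        rw [hDdef]
        simp only [e1, e2]
        push_cast
        ring
      have hn : ‖z‖ * ‖D t‖ ≤ t^(α-2) * β₂⁻¹ * ((Real.exp 1 - 1) * (t * ‖z‖)) := by
        rw [← norm_mul, hid]
        rw [norm_mul, norm_mul]
        have hr1 : ‖((t^(α-2):ℝ):ℂ)‖ = t^(α-2) := by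
          rw [Complex.norm_real, Real.norm_eq_abs, abs_of_pos (Real.rpow_pos_of_pos ht0 _)]
        have hr2 : ‖((β₂:ℂ))⁻¹‖ = β₂⁻¹ := by
          rw [norm_inv, Complex.norm_real, Real.norm_eq_abs, abs_of_pos hβ₂]
        rw [hr1, hr2]
        have hΦt := hΦ _ htz
        have htzn : ‖(t:ℂ)*z‖ = t * ‖z‖ := by
          rw [norm_mul, Complex.norm_real, Real.norm_eq_abs, abs_of_pos ht0]
        rw [htzn] at hΦt
        have h0 : (0:ℝ) ≤ t^(α-2) * β₂⁻¹ := by positivity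
        calc t^(α-2) * β₂⁻¹ * ‖_‖ ≤ t^(α-2) * β₂⁻¹ * ((Real.exp 1 - 1) * (t * ‖z‖)) := by
              apply mul_le_mul_of_nonneg_left hΦt h0
          _ = _ := rfl
      have hzpos : 0 < ‖z‖ := norm_pos_iff.2 hz0
      have : ‖D t‖ * ‖z‖ ≤ ((Real.exp 1 - 1)/β₂ * t^(α-1)) * ‖z‖ := by
        have er : t^(α-2) * β₂⁻¹ * ((Real.exp 1 - 1) * (t * ‖z‖))
            = ((Real.exp 1 - 1)/β₂ * (t^(α-2)*t)) * ‖z‖ := by field_simp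
        have er2 : t^(α-2)*t = t^(α-1) := by
          rw [← Real.rpow_add_one (ne_of_gt ht0)]; ring_nf
        rw [mul_comm ‖D t‖ ‖z‖]
        calc ‖z‖ * ‖D t‖ ≤ t^(α-2) * β₂⁻¹ * ((Real.exp 1 - 1) * (t * ‖z‖)) := hn
          _ = ((Real.exp 1 - 1)/β₂ * t^(α-1)) * ‖z‖ := by rw [er, er2]
      exact le_of_mul_le_mul_right this hzpos
    -- boundary estimate on [ε, 1]
    have step : ∀ ε ∈ Ioo (0:ℝ) 1,
        ‖deriv p z‖ ≤ (Real.exp 1 - 1)/β₁ + (ε^α) * ‖deriv p ((ε:ℂ)*z)‖ := by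
      intro ε hε
      set B : ℝ → ℝ := fun t => (Real.exp 1 - 1)/β₁ * (t^α - ε^α) with hBdef
      have hB' : ∀ x ∈ Ico ε 1, HasDerivWithinAt B
          ((Real.exp 1 - 1)/β₁ * (α * x^(α-1))) (Ici x) x := by
        intro x hx
        have hx0 : (0:ℝ) < x := lt_of_lt_of_le hε.1 hx.1
        exact (((Real.hasDerivAt_rpow_const (Or.inl (ne_of_gt hx0))).sub_const
          (ε^α)).const_mul _).hasDerivWithinAt
      have hf : ∀ x ∈ Icc ε 1, HasDerivAt (fun t => u₁ t - u₁ ε) (D x) x := by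
        intro x hx
        have hx0 : (0:ℝ) < x := lt_of_lt_of_le hε.1 hx.1
        exact (hu₁ x hx0 hx.2).sub_const (u₁ ε)
      have key := image_norm_le_of_norm_deriv_right_le_deriv_boundary'
        (f := fun t => u₁ t - u₁ ε) (a := ε) (b := 1) (f' := D)
        (fun x hx => (hf x hx).continuousAt.continuousWithinAt)
        (fun x hx => (hf x (Ico_subset_Icc_self hx)).hasDerivWithinAt)
        (B := B) (B' := fun x => (Real.exp 1 - 1)/β₁ * (α * x^(α-1)))
        (by simp [hBdef])
        (by
          apply ContinuousOn.mul continuousOn_const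
          apply ContinuousOn.sub _ continuousOn_const
          intro x hx
          exact (Real.continuousAt_rpow_const x α (Or.inr hα.le)).continuousWithinAt)
        hB'
        (by
          intro x hx
          have hx0 : (0:ℝ) < x := lt_of_lt_of_le hε.1 hx.1
          have := hDbound x hx0 hx.2.le
          calc ‖D x‖ ≤ (Real.exp 1 - 1)/β₂ * x^(α-1) := this
            _ = (Real.exp 1 - 1)/β₁ * (α * x^(α-1)) := by
                rw [hαdef]; field_simp)
      have h1 := key (x := 1) (by constructor <;> [exact hε.2.le; norm_num])
      have hu11 : u₁ 1 = deriv p z := by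
        rw [hu₁def]
        norm_num
      have hu1ε : ‖u₁ ε‖ = ε^α * ‖deriv p ((ε:ℂ)*z)‖ := by
        rw [hu₁def]
        simp only [norm_mul, Complex.norm_real, Real.norm_eq_abs,
          abs_of_pos (Real.rpow_pos_of_pos hε.1 _)]
      have hB1 : B 1 ≤ (Real.exp 1 - 1)/β₁ := by
        rw [hBdef]
        simp only [Real.one_rpow]
        have h2 : (0:ℝ) ≤ ε^α := (Real.rpow_pos_of_pos hε.1 _).le
        have h3 : (0:ℝ) < (Real.exp 1 - 1)/β₁ := by positivity
        nlinarith
      calc ‖deriv p z‖ = ‖u₁ 1‖ := by rw [hu11]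
        _ ≤ ‖u₁ 1 - u₁ ε‖ + ‖u₁ ε‖ := by
            have := norm_sub_norm_le (u₁ 1) (u₁ ε)
            have h := norm_add_le (u₁ 1 - u₁ ε) (u₁ ε)
            simpa using h
        _ ≤ B 1 + ‖u₁ ε‖ := by linarith [h1]
        _ ≤ (Real.exp 1 - 1)/β₁ + ε^α * ‖deriv p ((ε:ℂ)*z)‖ := by
            rw [hu1ε] at *
            linarith
    -- take the limit ε → 0⁺
    have hlim : Tendsto (fun ε:ℝ => (Real.exp 1 - 1)/β₁ + (ε^α) * ‖deriv p ((ε:ℂ)*z)‖)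
        (nhdsWithin (0:ℝ) (Ioi (0:ℝ))) (nhds ((Real.exp 1 - 1)/β₁ + 0 * ‖deriv p (((0:ℝ):ℂ)*z)‖)) := by
      apply Tendsto.const_add
      apply Tendsto.mul
      · have := (Real.continuousAt_rpow_const 0 α (Or.inr hα.le)).tendsto
        rw [Real.zero_rpow (ne_of_gt hα)] at this
        exact this.mono_left nhdsWithin_le_nhds
      · have h1 : ContinuousAt (fun ε:ℝ => (ε:ℂ)*z) 0 :=
          (Complex.continuous_ofReal.mul continuous_const).continuousAt
        have h2 : ContinuousAt (deriv p) (((0:ℝ):ℂ)*z) :=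
          (hd1 _ (by simp [mem_ball_zero_iff])).continuousAt
        have hc : Tendsto (fun ε:ℝ => deriv p ((ε:ℂ)*z)) (nhds (0:ℝ))
            (nhds (deriv p (((0:ℝ):ℂ)*z))) := h2.tendsto.comp h1.tendsto
        exact (hc.norm).mono_left nhdsWithin_le_nhds
    have hev : ∀ᶠ (ε:ℝ) in nhdsWithin (0:ℝ) (Ioi (0:ℝ)),
        ‖deriv p z‖ ≤ (Real.exp 1 - 1)/β₁ + (ε^α) * ‖deriv p ((ε:ℂ)*z)‖ := by
      filter_upwards [Ioo_mem_nhdsGT one_pos] with ε hε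
      exact step ε hε
    have := ge_of_tendsto hlim hev
    simpa using this
  intro z hz
  by_cases hz0 : z = 0
  · subst hz0
    have hlim : Tendsto (fun ε:ℝ => ‖deriv p ((ε:ℂ))‖)
        (nhdsWithin (0:ℝ) (Ioi (0:ℝ))) (nhds ‖deriv p 0‖) := by
      have h1 : ContinuousAt (fun ε:ℝ => ((ε:ℝ):ℂ)) 0 := Complex.continuous_ofReal.continuousAt
      have h2 : ContinuousAt (deriv p) (((0:ℝ):ℂ)) :=
        (hd1 _ (by simp [mem_ball_zero_iff])).continuousAt
      have hc : Tendsto (fun ε:ℝ => deriv p ((ε:ℝ):ℂ)) (nhds (0:ℝ))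
          (nhds (deriv p ((0:ℝ):ℂ))) := h2.tendsto.comp h1.tendsto
      simpa using (hc.norm).mono_left nhdsWithin_le_nhds
    have hev : ∀ᶠ (ε:ℝ) in nhdsWithin (0:ℝ) (Ioi (0:ℝ)),
        ‖deriv p ((ε:ℂ))‖ ≤ (Real.exp 1 - 1)/β₁ := by
      filter_upwards [Ioo_mem_nhdsGT one_pos] with ε hε
      apply main
      · rw [mem_ball_zero_iff, Complex.norm_real, Real.norm_eq_abs, abs_of_pos hε.1]
        exact hε.2
      · exact_mod_cast ne_of_gt hε.1
    exact le_of_tendsto hlim hev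
  · exact main z hz hz0

theorem stmt6 (β₁ β₂ : ℝ) (hβ₁ : 0 < β₁) (hβ₂ : 0 < β₂)
    (hcond : nu0 * (β₁ + β₂ * nu1) ≥ Real.exp 1 - 1)
    (p : ℂ → ℂ) (hp : AnalyticOnNhd ℂ p (ball 0 1)) (hp0 : p 0 = 1)
    (hsub : ∀ z ∈ ball (0 : ℂ) 1,
      (1 + (β₁ : ℂ) * z * deriv p z + (β₂ : ℂ) * z ^ 2 * deriv (deriv p) z) ≠ 0 ∧ ‖Complex.log (1 + (β₁ : ℂ) * z * deriv p z + (β₂ : ℂ) * z ^ 2 * deriv (deriv p) z)‖ < 1) :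
    ∀ z ∈ ball (0 : ℂ) 1, ∃ w ∈ ball (0 : ℂ) 1, p z = 1 + Complex.sin w := by
  have hcos1 : (0:ℝ) < Real.cos 1 := Real.cos_pos_of_mem_Ioo
    (by constructor <;> nlinarith [Real.pi_gt_three])
  have hE : (0:ℝ) < Real.exp 1 - 1 := by nlinarith [Real.exp_one_gt_d9]
  -- nu0 = cos 1
  have hnu0 : nu0 = Real.cos 1 := by
    rw [nu0, show (1:ℝ) - Real.sin 1 ^ 2 = Real.cos 1 ^ 2 by
      have := Real.sin_sq_add_cos_sq 1; linarith]
    exact Real.sqrt_sq hcos1.le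
  -- nu1 < 0
  have hnu1 : nu1 < 0 := by
    rw [nu1]
    have h2 : Real.sin 2 > 0 := Real.sin_pos_of_pos_of_lt_pi two_pos
      (by linarith [Real.pi_gt_three])
    have h3 : 1 + Real.cos 2 > 0 := by
      have := Real.cos_sq 1
      have h4 : Real.cos (2*1) = Real.cos 2 := by norm_num
      nlinarith [hcos1]
    exact div_neg_of_neg_of_pos (by linarith) h3
  -- β₁ > (e-1)/cos 1
  have hβ₁big : Real.exp 1 - 1 < Real.cos 1 * β₁ := by
    rw [hnu0] at hcond
    nlinarith [mul_pos hβ₂ (neg_pos.2 hnu1)]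
  have hC : (Real.exp 1 - 1)/β₁ < Real.cos 1 := by
    rw [div_lt_iff₀ hβ₁]
    nlinarith
  -- analyticity of derivatives
  have hd1 : AnalyticOnNhd ℂ (deriv p) (ball 0 1) := hp.deriv
  have hd2 : AnalyticOnNhd ℂ (deriv (deriv p)) (ball 0 1) := hd1.deriv
  set Φ : ℂ → ℂ := fun w => (β₁:ℂ)*w*deriv p w + (β₂:ℂ)*w^2*deriv (deriv p) w with hΦdef
  -- Schwarz bound for Φ
  have hΦdiff : DifferentiableOn ℂ Φ (ball 0 1) := by
    apply DifferentiableOn.add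
    · exact (differentiableOn_const _ |>.mul differentiableOn_id).mul hd1.differentiableOn
    · exact (differentiableOn_const _ |>.mul (differentiableOn_id.pow 2)).mul hd2.differentiableOn
  have hΦ0 : Φ 0 = 0 := by simp [hΦdef]
  have hΦsmall : MapsTo Φ (ball (0:ℂ) 1) (ball (Φ 0) (Real.exp 1 - 1)) := by
    intro w hw
    rw [hΦ0, mem_ball_zero_iff]
    obtain ⟨hne, hlog⟩ := hsub w hw
    have hΦw : Φ w = Complex.exp (Complex.log
        (1 + (β₁:ℂ)*w*deriv p w + (β₂:ℂ)*w^2*deriv (deriv p) w)) - 1 := by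
      rw [Complex.exp_log hne, hΦdef]
      ring
    rw [hΦw]
    calc ‖Complex.exp _ - 1‖ ≤ Real.exp ‖Complex.log
          (1 + (β₁:ℂ)*w*deriv p w + (β₂:ℂ)*w^2*deriv (deriv p) w)‖ - 1 :=
          norm_exp_sub_one_le' _
      _ < Real.exp 1 - 1 := by
          have h1 : ‖Complex.log (1 + (β₁:ℂ)*w*deriv p w + (β₂:ℂ)*w^2*deriv (deriv p) w)‖ < 1 := by
            exact hlog
          have := Real.exp_lt_exp.2 h1
          linarith
  have hΦbd : ∀ w ∈ ball (0:ℂ) 1, ‖Φ w‖ ≤ (Real.exp 1 - 1)*‖w‖ := by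
    intro w hw
    have := Complex.dist_le_div_mul_dist_of_mapsTo_ball hΦdiff (hΦsmall.mono_right ball_subset_closedBall) hw
    simpa [dist_eq_norm, hΦ0] using this
  -- bound on deriv p
  have hder := deriv_bound β₁ β₂ hβ₁ hβ₂ p hp hΦbd
  -- MVT
  intro z hz
  have hpz : ‖p z - 1‖ ≤ Real.cos 1 := by
    have hmvt := Convex.norm_image_sub_le_of_norm_deriv_le
      (f := p) (s := ball (0:ℂ) 1) (C := (Real.exp 1 - 1)/β₁)
      (fun x hx => (hp x hx).differentiableAt)
      hder (convex_ball 0 1) (mem_ball_self one_pos) hz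
    rw [hp0] at hmvt
    have hz1 : ‖z - 0‖ ≤ 1 := by
      rw [mem_ball_zero_iff] at hz
      simpa using hz.le
    calc ‖p z - 1‖ ≤ (Real.exp 1 - 1)/β₁ * ‖z - 0‖ := hmvt
      _ ≤ (Real.exp 1 - 1)/β₁ * 1 := by
          apply mul_le_mul_of_nonneg_left hz1 (by positivity)
      _ ≤ Real.cos 1 := by linarith
  obtain ⟨w, hw1, hw2⟩ := exists_sin_eq_s6 (p z - 1) hpz
  exact ⟨w, by rwa [mem_ball_zero_iff], by rw [hw2]; ring⟩
end
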